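/- arXiv:2305.00728 — 4 statements merged into one kernel-verified Lean document; each statement's English description precedes it below -/
import Mathlib

section
/- For γ = 2, the radial principal eigenvalue of the Pucci maximal operator satisfies λ̄'_2(𝓜⁺) = Λ·(Ñ₊−2)²/4. Moreover the function u(r) = r^{−(Ñ₊−2)/2}·(−ln r) is positive on (0,1), satisfies u(1) = 0, and solves 𝓜⁺[u](r) + Λ·((Ñ₊−2)/2)²·u(r)·r^{−2} = 0 for all r ∈ (0,1). -/
open Set Real Filter MeasureTheory

noncomputable section

/-- The radial expression of the Pucci maximal operator `𝓜⁺` applied to a radial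
function `u = u(r)`. -/
def pucciP (lam Lam : ℝ) (N : ℕ) (u : ℝ → ℝ) (r : ℝ) : ℝ :=
  Lam * max (deriv (deriv u) r) 0 - lam * max (-(deriv (deriv u) r)) 0 +
  ((N : ℝ) - 1) * (Lam * max (deriv u r / r) 0 - lam * max (-(deriv u r / r)) 0)

/-- The radial expression of the Pucci minimal operator `𝓜⁻` applied to a radial
function `u = u(r)`. -/
def pucciM (lam Lam : ℝ) (N : ℕ) (u : ℝ → ℝ) (r : ℝ) : ℝ :=
  lam * max (deriv (deriv u) r) 0 - Lam * max (-(deriv (deriv u) r)) 0 +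
  ((N : ℝ) - 1) * (lam * max (deriv u r / r) 0 - Lam * max (-(deriv u r / r)) 0)

/-- The radial principal eigenvalue `λ̄'_γ` on the punctured unit ball for a radial
operator `Op`. -/
def radialEVop (Op : (ℝ → ℝ) → ℝ → ℝ) (γ : ℝ) : ℝ :=
  sSup {μ : ℝ | ∃ u : ℝ → ℝ, ContDiffOn ℝ 2 u (Ioo 0 1) ∧
    (∀ r ∈ Ioo (0:ℝ) 1, 0 < u r) ∧
    (∀ r ∈ Ioo (0:ℝ) 1, Op u r + μ * u r * r ^ (-γ) ≤ 0)}

lemma rpow_shift {r : ℝ} (hr : 0 < r) (p : ℝ) : r ^ p * r = r ^ (p + 1) := by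
  rw [Real.rpow_add hr, Real.rpow_one]

lemma deriv_u0 (α : ℝ) {r : ℝ} (hr : 0 < r) :
    HasDerivAt (fun r : ℝ => r ^ (-α) * (-Real.log r))
      (r ^ (-α - 1) * (α * Real.log r - 1)) r := by
  have h1 : HasDerivAt (fun r : ℝ => r ^ (-α)) (-α * r ^ (-α - 1)) r :=
    Real.hasDerivAt_rpow_const (Or.inl hr.ne')
  have h2 : HasDerivAt (fun r : ℝ => -Real.log r) (-r⁻¹) r :=
    (Real.hasDerivAt_log hr.ne').neg
  have h := h1.mul h2
  have hkey : r ^ (-α) = r ^ (-α - 1) * r := by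
    rw [rpow_shift hr]; congr 1; ring
  have heq : -α * r ^ (-α - 1) * -Real.log r + r ^ (-α) * -r⁻¹
      = r ^ (-α - 1) * (α * Real.log r - 1) := by
    rw [hkey]; field_simp; ring
  exact heq ▸ h

lemma deriv_g0 (α : ℝ) {r : ℝ} (hr : 0 < r) :
    HasDerivAt (fun r : ℝ => r ^ (-α - 1) * (α * Real.log r - 1))
      (r ^ (-α - 2) * (-(α * (α + 1)) * Real.log r + (2 * α + 1))) r := by
  have h1 : HasDerivAt (fun r : ℝ => r ^ (-α - 1)) ((-α - 1) * r ^ (-α - 2)) r := by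
    have := Real.hasDerivAt_rpow_const (p := -α - 1) (Or.inl hr.ne')
    rwa [show -α - 1 - 1 = -α - 2 by ring] at this
  have h2 : HasDerivAt (fun r : ℝ => α * Real.log r - 1) (α * r⁻¹) r :=
    ((Real.hasDerivAt_log hr.ne').const_mul α).sub_const 1
  have h := h1.mul h2
  have hkey : r ^ (-α - 1) = r ^ (-α - 2) * r := by
    rw [rpow_shift hr]; congr 1; ring
  have heq : (-α - 1) * r ^ (-α - 2) * (α * Real.log r - 1) + r ^ (-α - 1) * (α * r⁻¹)
      = r ^ (-α - 2) * (-(α * (α + 1)) * Real.log r + (2 * α + 1)) := by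
    rw [hkey]; field_simp; ring
  exact heq ▸ h

lemma sturm {v v1 v2 : ℝ → ℝ} {c : ℝ} (hc : 0 < c)
    (hv : ∀ t < (0:ℝ), HasDerivAt v (v1 t) t)
    (hv1 : ∀ t < (0:ℝ), HasDerivAt v1 (v2 t) t)
    (hpos : ∀ t < (0:ℝ), 0 < v t)
    (hineq : ∀ t < (0:ℝ), v2 t + c * v t ≤ 0) : False := by
  set β := Real.sqrt c with hβdef
  have hβ : 0 < β := Real.sqrt_pos.2 hc
  have hb2 : β * β = c := Real.mul_self_sqrt hc.le
  set a : ℝ := -(π / β) - 1 with hadef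
  set b : ℝ := -1 with hbdef
  have hπβ : 0 < π / β := div_pos Real.pi_pos hβ
  have hab : a < b := by simp only [hadef, hbdef]; linarith
  have hba : β * (b - a) = π := by
    have : b - a = π / β := by simp only [hadef, hbdef]; ring
    rw [this]; field_simp
  have hneg : ∀ t ∈ Icc a b, t < 0 := fun t ht => lt_of_le_of_lt ht.2 (by norm_num [hbdef])
  set s : ℝ → ℝ := fun t => Real.sin (β * (t - a)) with hsdef
  set W : ℝ → ℝ := fun t => v t * (Real.cos (β * (t - a)) * β) - v1 t * s t with hWdef
  have hlin : ∀ t : ℝ, HasDerivAt (fun t => β * (t - a)) β t := fun t => by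
    simpa using ((hasDerivAt_id t).sub_const a).const_mul β
  have hsd : ∀ t : ℝ, HasDerivAt s (Real.cos (β * (t - a)) * β) t := fun t =>
    (hlin t).sin
  have hcd : ∀ t : ℝ, HasDerivAt (fun t => Real.cos (β * (t - a)) * β)
      (-Real.sin (β * (t - a)) * β * β) t := fun t => by
    simpa [mul_assoc] using ((hlin t).cos).mul_const β
  have hW : ∀ t ∈ Icc a b, HasDerivAt W (-(s t * (v2 t + c * v t))) t := by
    intro t ht
    have ht0 := hneg t ht
    have h := ((hv t ht0).mul (hcd t)).sub ((hv1 t ht0).mul (hsd t))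
    have heq : v1 t * (Real.cos (β * (t - a)) * β) + v t * (-Real.sin (β * (t - a)) * β * β)
        - (v2 t * s t + v1 t * (Real.cos (β * (t - a)) * β))
        = -(s t * (v2 t + c * v t)) := by
      simp only [hsdef, ← hb2]; ring
    exact heq ▸ h
  have hmono : MonotoneOn W (Icc a b) := by
    apply monotoneOn_of_deriv_nonneg (convex_Icc a b)
    · exact fun t ht => ((hW t ht).continuousAt).continuousWithinAt
    · rw [interior_Icc]
      exact fun t ht => ((hW t (Ioo_subset_Icc_self ht)).differentiableAt).differentiableWithinAt
    · rw [interior_Icc]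
      intro t ht
      rw [(hW t (Ioo_subset_Icc_self ht)).deriv]
      have hs0 : 0 ≤ s t := by
        apply Real.sin_nonneg_of_nonneg_of_le_pi
        · nlinarith [ht.1]
        · nlinarith [ht.2, hba]
      have := hineq t (hneg t (Ioo_subset_Icc_self ht))
      nlinarith
  have hWa : W a = v a * β := by simp [hWdef, hsdef]
  have hWb : W b = -(v b * β) := by
    simp only [hWdef, hsdef, hba, Real.sin_pi, Real.cos_pi]; ring
  have hle := hmono (left_mem_Icc.2 hab.le) (right_mem_Icc.2 hab.le) hab.le
  rw [hWa, hWb] at hle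
  have hva := hpos a (hneg a (left_mem_Icc.2 hab.le))
  have hvb := hpos b (hneg b (right_mem_Icc.2 hab.le))
  nlinarith

theorem stmt2 (N : ℕ) (hN : 2 ≤ N) (lam Lam : ℝ) (hlam : 0 < lam) (hlL : lam ≤ Lam)
    (Np : ℝ) (hNpdef : Np = lam / Lam * ((N : ℝ) - 1) + 1) (hNp : 2 < Np) :
    radialEVop (pucciP lam Lam N) 2 = Lam * (Np - 2) ^ 2 / 4 ∧
    (∀ r ∈ Ioo (0:ℝ) 1, 0 < r ^ (-((Np - 2) / 2)) * (-Real.log r)) ∧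
    ((1:ℝ) ^ (-((Np - 2) / 2)) * (-Real.log 1) = 0) ∧
    (∀ r ∈ Ioo (0:ℝ) 1,
      pucciP lam Lam N (fun r => r ^ (-((Np - 2) / 2)) * (-Real.log r)) r
        + Lam * ((Np - 2) / 2) ^ 2
          * (r ^ (-((Np - 2) / 2)) * (-Real.log r)) * r ^ (-(2:ℝ)) = 0) := by
  have hLam : 0 < Lam := lt_of_lt_of_le hlam hlL
  set α := (Np - 2) / 2 with hαdef
  have hα : 0 < α := by rw [hαdef]; linarith
  have hN1 : (1:ℝ) ≤ (N:ℝ) - 1 := by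
    have : (2:ℝ) ≤ (N:ℝ) := by exact_mod_cast hN
    linarith
  have hln : lam * ((N:ℝ) - 1) = Lam * (2 * α + 1) := by
    have h1 : lam / Lam * ((N:ℝ) - 1) = 2 * α + 1 := by rw [hαdef]; linarith [hNpdef]
    calc lam * ((N:ℝ) - 1) = Lam * (lam / Lam * ((N:ℝ) - 1)) := by field_simp
      _ = Lam * (2 * α + 1) := by rw [h1]
  -- Part 2: positivity
  have part2 : ∀ r ∈ Ioo (0:ℝ) 1, 0 < r ^ (-α) * (-Real.log r) := by
    intro r hr
    exact mul_pos (Real.rpow_pos_of_pos hr.1 _) (neg_pos.2 (Real.log_neg hr.1 hr.2))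
  -- Part 4: the PDE
  have part4 : ∀ r ∈ Ioo (0:ℝ) 1,
      pucciP lam Lam N (fun r => r ^ (-α) * (-Real.log r)) r
        + Lam * α ^ 2 * (r ^ (-α) * (-Real.log r)) * r ^ (-(2:ℝ)) = 0 := by
    intro r hr
    obtain ⟨hr0, hr1⟩ := hr
    have hLneg : Real.log r < 0 := Real.log_neg hr0 hr1
    have hd1 : deriv (fun r : ℝ => r ^ (-α) * (-Real.log r)) r
        = r ^ (-α - 1) * (α * Real.log r - 1) := (deriv_u0 α hr0).deriv
    have hev : deriv (fun r : ℝ => r ^ (-α) * (-Real.log r))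
        =ᶠ[nhds r] fun x => x ^ (-α - 1) * (α * Real.log x - 1) := by
      filter_upwards [Ioi_mem_nhds hr0] with x hx
      exact (deriv_u0 α hx).deriv
    have hd2 : deriv (deriv (fun r : ℝ => r ^ (-α) * (-Real.log r))) r
        = r ^ (-α - 2) * (-(α * (α + 1)) * Real.log r + (2 * α + 1)) := by
      rw [hev.deriv_eq]; exact (deriv_g0 α hr0).deriv
    have hX : 0 < r ^ (-α - 2) := Real.rpow_pos_of_pos hr0 _
    have hX1 : 0 < r ^ (-α - 1) := Real.rpow_pos_of_pos hr0 _
    have hGpos : 0 < r ^ (-α - 2) * (-(α * (α + 1)) * Real.log r + (2 * α + 1)) := by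
      apply mul_pos hX
      nlinarith [mul_pos (mul_pos hα (show (0:ℝ) < α + 1 by linarith)) (show (0:ℝ) < -Real.log r by linarith)]
    have hgneg : r ^ (-α - 1) * (α * Real.log r - 1) < 0 := by
      apply mul_neg_of_pos_of_neg hX1
      nlinarith [mul_pos hα (show (0:ℝ) < -Real.log r by linarith)]
    have hgrneg : r ^ (-α - 1) * (α * Real.log r - 1) / r < 0 := div_neg_of_neg_of_pos hgneg hr0
    have m1 : r ^ (-α) * r ^ (-(2:ℝ)) = r ^ (-α - 2) := by
      rw [← Real.rpow_add hr0]; ring_nf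
    have m2 : r ^ (-α - 1) * (α * Real.log r - 1) / r = r ^ (-α - 2) * (α * Real.log r - 1) := by
      have hsh : r ^ (-α - 2) * r = r ^ (-α - 1) := by rw [rpow_shift hr0]; congr 1; ring
      rw [← hsh]; field_simp
    unfold pucciP
    rw [hd1, hd2, max_eq_left hGpos.le, max_eq_right (neg_nonpos.2 hGpos.le),
      max_eq_right hgrneg.le, max_eq_left (neg_nonneg.2 hgrneg.le), m2]
    have m3 : Lam * α ^ 2 * (r ^ (-α) * (-Real.log r)) * r ^ (-(2:ℝ))
        = Lam * α ^ 2 * (r ^ (-α - 2) * (-Real.log r)) := by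
      rw [← m1]; ring
    rw [m3]
    linear_combination (r ^ (-α - 2) * (α * Real.log r - 1)) * hln
  -- C² regularity
  have hC2 : ContDiffOn ℝ 2 (fun r : ℝ => r ^ (-α) * (-Real.log r)) (Ioo 0 1) := by
    intro r hr
    have h1 : ContDiffAt ℝ 2 (fun r : ℝ => r ^ (-α)) r :=
      Real.contDiffAt_rpow_const_of_ne hr.1.ne'
    have h2 : ContDiffAt ℝ 2 (fun r : ℝ => -Real.log r) r :=
      (Real.contDiffAt_log.2 hr.1.ne').neg
    exact (h1.mul h2).contDiffWithinAt
  -- membership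
  have hmem : Lam * (Np - 2) ^ 2 / 4 ∈ {μ : ℝ | ∃ u : ℝ → ℝ, ContDiffOn ℝ 2 u (Ioo 0 1) ∧
      (∀ r ∈ Ioo (0:ℝ) 1, 0 < u r) ∧
      (∀ r ∈ Ioo (0:ℝ) 1, pucciP lam Lam N u r + μ * u r * r ^ (-(2:ℝ)) ≤ 0)} := by
    refine ⟨fun r : ℝ => r ^ (-α) * (-Real.log r), hC2, part2, fun r hr => ?_⟩
    have h4 := part4 r hr
    have he : Lam * (Np - 2) ^ 2 / 4 * (r ^ (-α) * (-Real.log r)) * r ^ (-(2:ℝ))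
        = Lam * α ^ 2 * (r ^ (-α) * (-Real.log r)) * r ^ (-(2:ℝ)) := by
      rw [hαdef]; ring
    rw [he]; linarith
  -- upper bound
  have hub : ∀ μ ∈ {μ : ℝ | ∃ u : ℝ → ℝ, ContDiffOn ℝ 2 u (Ioo 0 1) ∧
      (∀ r ∈ Ioo (0:ℝ) 1, 0 < u r) ∧
      (∀ r ∈ Ioo (0:ℝ) 1, pucciP lam Lam N u r + μ * u r * r ^ (-(2:ℝ)) ≤ 0)},
      μ ≤ Lam * (Np - 2) ^ 2 / 4 := by
    rintro μ ⟨u, hu2, hupos, huineq⟩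
    by_contra hcon
    push_neg at hcon
    have hμα : Lam * α ^ 2 < μ := by
      have : Lam * α ^ 2 = Lam * (Np - 2) ^ 2 / 4 := by rw [hαdef]; ring
      linarith
    have hud : ∀ r ∈ Ioo (0:ℝ) 1, HasDerivAt u (deriv u r) r := fun r hr =>
      (((hu2.differentiableOn (by norm_num)) r hr).differentiableAt
        (isOpen_Ioo.mem_nhds hr)).hasDerivAt
    have hud2 : ∀ r ∈ Ioo (0:ℝ) 1, HasDerivAt (deriv u) (deriv (deriv u) r) r := by
      have h1 : ContDiffOn ℝ 1 (deriv u) (Ioo 0 1) :=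
        hu2.deriv_of_isOpen isOpen_Ioo (by norm_num)
      exact fun r hr => (((h1.differentiableOn one_ne_zero) r hr).differentiableAt
        (isOpen_Ioo.mem_nhds hr)).hasDerivAt
    -- pointwise differential inequality, division-free
    have hkey : ∀ r ∈ Ioo (0:ℝ) 1,
        Lam * (r * r * deriv (deriv u) r + (2 * α + 1) * r * deriv u r) + μ * u r ≤ 0 := by
      intro r hr
      have hr0 := hr.1
      have hP := huineq r hr
      set s2 := deriv (deriv u) r with hs2
      set s1 := deriv u r / r with hs1
      have c1 : Lam * s2 ≤ Lam * max s2 0 - lam * max (-s2) 0 := by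
        rcases le_total 0 s2 with h | h
        · rw [max_eq_left h, max_eq_right (neg_nonpos.2 h)]; linarith
        · rw [max_eq_right h, max_eq_left (neg_nonneg.2 h)]; nlinarith
      have c2 : lam * s1 ≤ Lam * max s1 0 - lam * max (-s1) 0 := by
        rcases le_total 0 s1 with h | h
        · rw [max_eq_left h, max_eq_right (neg_nonpos.2 h)]; nlinarith
        · rw [max_eq_right h, max_eq_left (neg_nonneg.2 h)]; linarith
      have hNn : (0:ℝ) ≤ (N:ℝ) - 1 := by linarith
      have c2' := mul_le_mul_of_nonneg_left c2 hNn
      unfold pucciP at hP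
      have hmain : Lam * s2 + ((N:ℝ) - 1) * (lam * s1) + μ * u r * r ^ (-(2:ℝ)) ≤ 0 := by
        linarith
      have h2 : r ^ (-(2:ℝ)) = (r * r)⁻¹ := by
        rw [Real.rpow_neg hr0.le, show (2:ℝ) = ((2:ℕ):ℝ) by norm_num, Real.rpow_natCast]
        rw [pow_two]
      have hmul := mul_le_mul_of_nonneg_left hmain (le_of_lt (mul_pos hr0 hr0))
      have heq : r * r * (Lam * s2 + ((N:ℝ) - 1) * (lam * s1) + μ * u r * r ^ (-(2:ℝ)))
          = Lam * (r * r * s2 + (2 * α + 1) * r * deriv u r) + μ * u r := by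
        rw [h2, hs1]
        field_simp
        linear_combination (r * deriv u r) * hln
      rw [heq] at hmul
      linarith
    -- transplant to log coordinates
    have hrmem : ∀ t : ℝ, t < 0 → Real.exp t ∈ Ioo (0:ℝ) 1 := fun t ht =>
      ⟨Real.exp_pos t, Real.exp_lt_one_iff.2 ht⟩
    have hA : ∀ t : ℝ, HasDerivAt (fun t => Real.exp (α * t)) (α * Real.exp (α * t)) t := by
      intro t
      have h := ((hasDerivAt_id t).const_mul α).exp
      simpa [mul_comm] using h
    have hv : ∀ t < (0:ℝ), HasDerivAt (fun t => Real.exp (α * t) * u (Real.exp t))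
        (α * Real.exp (α * t) * u (Real.exp t)
          + Real.exp (α * t) * (deriv u (Real.exp t) * Real.exp t)) t := by
      intro t ht
      exact (hA t).mul ((hud _ (hrmem t ht)).comp t (Real.hasDerivAt_exp t))
    have hv1 : ∀ t < (0:ℝ), HasDerivAt (fun t => α * Real.exp (α * t) * u (Real.exp t)
          + Real.exp (α * t) * (deriv u (Real.exp t) * Real.exp t))
        (α ^ 2 * Real.exp (α * t) * u (Real.exp t)
          + (2 * α + 1) * (Real.exp (α * t) * Real.exp t) * deriv u (Real.exp t)
          + Real.exp (α * t) * Real.exp t * Real.exp t * deriv (deriv u) (Real.exp t)) t := by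
      intro t ht
      have hB := (hud _ (hrmem t ht)).comp t (Real.hasDerivAt_exp t)
      have hC := (hud2 _ (hrmem t ht)).comp t (Real.hasDerivAt_exp t)
      have hD := hC.mul (Real.hasDerivAt_exp t)
      have term1 := ((hA t).const_mul α).mul hB
      have term2 := (hA t).mul hD
      have h := term1.add term2
      have heq : α * (α * Real.exp (α * t)) * u (Real.exp t)
            + α * Real.exp (α * t) * (deriv u (Real.exp t) * Real.exp t)
            + (α * Real.exp (α * t) * (deriv u (Real.exp t) * Real.exp t)
              + Real.exp (α * t) * (deriv (deriv u) (Real.exp t) * Real.exp t * Real.exp t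
                + deriv u (Real.exp t) * Real.exp t))
          = α ^ 2 * Real.exp (α * t) * u (Real.exp t)
            + (2 * α + 1) * (Real.exp (α * t) * Real.exp t) * deriv u (Real.exp t)
            + Real.exp (α * t) * Real.exp t * Real.exp t * deriv (deriv u) (Real.exp t) := by
        ring
      exact heq ▸ h
    have hvpos : ∀ t < (0:ℝ), 0 < Real.exp (α * t) * u (Real.exp t) := fun t ht =>
      mul_pos (Real.exp_pos _) (hupos _ (hrmem t ht))
    have hc : 0 < μ / Lam - α ^ 2 := by
      have : α ^ 2 < μ / Lam := (lt_div_iff₀ hLam).2 (by nlinarith)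
      linarith
    have hvineq : ∀ t < (0:ℝ),
        (α ^ 2 * Real.exp (α * t) * u (Real.exp t)
          + (2 * α + 1) * (Real.exp (α * t) * Real.exp t) * deriv u (Real.exp t)
          + Real.exp (α * t) * Real.exp t * Real.exp t * deriv (deriv u) (Real.exp t))
        + (μ / Lam - α ^ 2) * (Real.exp (α * t) * u (Real.exp t)) ≤ 0 := by
      intro t ht
      have hk := hkey _ (hrmem t ht)
      have hE : 0 < Real.exp t := Real.exp_pos t
      have hEA : 0 < Real.exp (α * t) := Real.exp_pos _
      have heq : (α ^ 2 * Real.exp (α * t) * u (Real.exp t)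
            + (2 * α + 1) * (Real.exp (α * t) * Real.exp t) * deriv u (Real.exp t)
            + Real.exp (α * t) * Real.exp t * Real.exp t * deriv (deriv u) (Real.exp t))
          + (μ / Lam - α ^ 2) * (Real.exp (α * t) * u (Real.exp t))
          = (Real.exp (α * t) / Lam) *
            (Lam * (Real.exp t * Real.exp t * deriv (deriv u) (Real.exp t)
              + (2 * α + 1) * Real.exp t * deriv u (Real.exp t)) + μ * u (Real.exp t)) := by
        field_simp
        ring
      rw [heq]
      exact mul_nonpos_of_nonneg_of_nonpos (div_nonneg hEA.le hLam.le) hk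
    exact sturm hc hv hv1 hvpos hvineq
  refine ⟨?_, part2, by simp, part4⟩
  unfold radialEVop
  exact le_antisymm (csSup_le ⟨_, hmem⟩ hub) (le_csSup ⟨_, hub⟩ hmem)

end
end

section
/- For γ = 2, the radial principal eigenvalue of the Pucci minimal operator satisfies λ̄'_2(𝓜⁻) = λ·(Ñ₋−2)²/4. Moreover the function u(r) = r^{−(Ñ₋−2)/2}·(−ln r) is positive on (0,1), satisfies u(1) = 0, and solves 𝓜⁻[u](r) + λ·((Ñ₋−2)/2)²·u(r)·r^{−2} = 0 for all r ∈ (0,1). -/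
open Set Real Filter MeasureTheory

noncomputable section

lemma quad_lower (b m c x : ℝ) (hm : 0 ≤ m)
    (h : c * (1 + m) ≤ m - b ^ 2 / 4) : c * (1 + x ^ 2) ≤ x ^ 2 - b * x + m := by
  have hc1 : c < 1 := by nlinarith [sq_nonneg b]
  nlinarith [sq_nonneg (2 * (1 - c) * x - b), sq_nonneg c]

set_option maxHeartbeats 1000000 in
lemma riccati_step (lam Lam : ℝ) (N : ℕ) (μ c α : ℝ)
    (hlam : 0 < lam) (hlL : lam ≤ Lam) (hN2 : (2:ℝ) ≤ N)
    (hNt : 0 < ((N:ℝ) - 1) * lam / Lam - 1)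
    (hα2 : 2 * α + 1 = ((N:ℝ) - 1) * Lam / lam)
    (hαge : ((N:ℝ) - 2) / 2 ≤ α)
    (hμ : 0 < μ)
    (hcase1 : c * (1 + μ / lam) ≤ μ / lam - α ^ 2)
    (hcase3 : c * (1 + μ / Lam) ≤ μ / Lam - ((N:ℝ) - 2) ^ 2 / 4)
    (a b d r : ℝ) (ha : 0 < a) (hr : 0 < r)
    (P : lam * max d 0 - Lam * max (-d) 0 +
      ((N : ℝ) - 1) * (lam * max (b / r) 0 - Lam * max (-(b / r)) 0) +
      μ * a * r ^ (-(2:ℝ)) ≤ 0) :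
    c * (1 + (-(r * b) / a) ^ 2) ≤
      r * ((-(1 * b + r * d) * a - -(r * b) * b) / a ^ 2) := by
  have hLam : 0 < Lam := lt_of_lt_of_le hlam hlL
  have hr2 : r ^ (-(2:ℝ)) = (r ^ 2)⁻¹ := by
    rw [Real.rpow_neg hr.le, show (2:ℝ) = ((2:ℕ):ℝ) by norm_num, Real.rpow_natCast]
  rw [hr2] at P
  have ha' : a ≠ 0 := ha.ne'
  have hr' : r ≠ 0 := hr.ne'
  have hαsq : ((N:ℝ) - 2) ^ 2 / 4 ≤ α ^ 2 := by
    have h0 : (0:ℝ) ≤ ((N:ℝ) - 2) / 2 := by linarith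
    nlinarith [mul_self_le_mul_self h0 hαge]
  set x : ℝ := -(r * b) / a with hx
  have hgoal : r * ((-(1 * b + r * d) * a - -(r * b) * b) / a ^ 2)
      = x + x ^ 2 - r ^ 2 * d / a := by
    rw [hx]; field_simp; ring
  rw [hgoal]
  have hmlam : (0:ℝ) ≤ μ / lam := le_of_lt (div_pos hμ hlam)
  have hmLam : (0:ℝ) ≤ μ / Lam := le_of_lt (div_pos hμ hLam)
  rcases le_or_gt 0 d with hd | hd <;> rcases le_or_gt 0 b with hb | hb
  · -- d ≥ 0, b ≥ 0 : x ≤ 0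
    rw [max_eq_left hd, max_eq_right (neg_nonpos.mpr hd),
      max_eq_left (div_nonneg hb hr.le),
      max_eq_right (neg_nonpos.mpr (div_nonneg hb hr.le))] at P
    have h1 : lam * (r ^ 2 * d) + ((N:ℝ) - 1) * lam * (r * b) + μ * a ≤ 0 := by
      have h2 := mul_le_mul_of_nonneg_right P (pow_pos hr 2).le
      rw [zero_mul] at h2
      have e : lam * (r ^ 2 * d) + ((N:ℝ) - 1) * lam * (r * b) + μ * a =
        (lam * d - Lam * 0 + ((N:ℝ) - 1) * (lam * (b / r) - Lam * 0) +
          μ * a * (r ^ 2)⁻¹) * r ^ 2 := by field_simp; ring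
      linarith [e ▸ h2]
    have hs : r ^ 2 * d / a ≤ ((N:ℝ) - 1) * x - μ / lam := by
      have e : ((N:ℝ) - 1) * x - μ / lam - r ^ 2 * d / a
          = (-(lam * (r ^ 2 * d) + ((N:ℝ) - 1) * lam * (r * b) + μ * a)) / (lam * a) := by
        rw [hx]; field_simp; ring
      have h3 : (0:ℝ) ≤ (-(lam * (r ^ 2 * d) + ((N:ℝ) - 1) * lam * (r * b) + μ * a)) / (lam * a) :=
        div_nonneg (by linarith) (by positivity)
      linarith [e ▸ h3]
    have Q := quad_lower ((N:ℝ) - 2) (μ / lam) c x hmlam (by linarith)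
    linarith
  · -- d ≥ 0, b < 0 : x ≥ 0
    have hbr : b / r ≤ 0 := div_nonpos_of_nonpos_of_nonneg hb.le hr.le
    rw [max_eq_left hd, max_eq_right (neg_nonpos.mpr hd),
      max_eq_right hbr, max_eq_left (neg_nonneg.mpr hbr)] at P
    have h1 : lam * (r ^ 2 * d) + ((N:ℝ) - 1) * Lam * (r * b) + μ * a ≤ 0 := by
      have h2 := mul_le_mul_of_nonneg_right P (pow_pos hr 2).le
      rw [zero_mul] at h2
      have e : lam * (r ^ 2 * d) + ((N:ℝ) - 1) * Lam * (r * b) + μ * a =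
        (lam * d - Lam * 0 + ((N:ℝ) - 1) * (lam * 0 - Lam * -(b / r)) +
          μ * a * (r ^ 2)⁻¹) * r ^ 2 := by field_simp; ring
      linarith [e ▸ h2]
    have hs : r ^ 2 * d / a ≤ (2 * α + 1) * x - μ / lam := by
      have e : (2 * α + 1) * x - μ / lam - r ^ 2 * d / a
          = (-(lam * (r ^ 2 * d) + ((N:ℝ) - 1) * Lam * (r * b) + μ * a)) / (lam * a) := by
        rw [hα2, hx]; field_simp; ring
      have h3 : (0:ℝ) ≤ (-(lam * (r ^ 2 * d) + ((N:ℝ) - 1) * Lam * (r * b) + μ * a)) / (lam * a) :=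
        div_nonneg (by linarith) (by positivity)
      linarith [e ▸ h3]
    have Q := quad_lower (2 * α) (μ / lam) c x hmlam (by nlinarith [hcase1])
    linarith
  · -- d < 0, b ≥ 0
    rw [max_eq_right hd.le, max_eq_left (neg_nonneg.mpr hd.le),
      max_eq_left (div_nonneg hb hr.le),
      max_eq_right (neg_nonpos.mpr (div_nonneg hb hr.le))] at P
    have h1 : Lam * (r ^ 2 * d) + ((N:ℝ) - 1) * lam * (r * b) + μ * a ≤ 0 := by
      have h2 := mul_le_mul_of_nonneg_right P (pow_pos hr 2).le
      rw [zero_mul] at h2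
      have e : Lam * (r ^ 2 * d) + ((N:ℝ) - 1) * lam * (r * b) + μ * a =
        (lam * 0 - Lam * -d + ((N:ℝ) - 1) * (lam * (b / r) - Lam * 0) +
          μ * a * (r ^ 2)⁻¹) * r ^ 2 := by field_simp; ring
      linarith [e ▸ h2]
    have hs : r ^ 2 * d / a ≤ (((N:ℝ) - 1) * lam / Lam) * x - μ / Lam := by
      have e : (((N:ℝ) - 1) * lam / Lam) * x - μ / Lam - r ^ 2 * d / a
          = (-(Lam * (r ^ 2 * d) + ((N:ℝ) - 1) * lam * (r * b) + μ * a)) / (Lam * a) := by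
        rw [hx]; field_simp; ring
      have h3 : (0:ℝ) ≤ (-(Lam * (r ^ 2 * d) + ((N:ℝ) - 1) * lam * (r * b) + μ * a)) / (Lam * a) :=
        div_nonneg (by linarith) (by positivity)
      linarith [e ▸ h3]
    have hble : ((N:ℝ) - 1) * lam / Lam - 1 ≤ (N:ℝ) - 2 := by
      have h4 : ((N:ℝ) - 1) * lam / Lam ≤ (N:ℝ) - 1 := by
        rw [div_le_iff₀ hLam]; nlinarith
      linarith
    have hb4 : (((N:ℝ) - 1) * lam / Lam - 1) ^ 2 ≤ ((N:ℝ) - 2) ^ 2 :=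
      pow_le_pow_left₀ hNt.le hble 2
    have Q := quad_lower (((N:ℝ) - 1) * lam / Lam - 1) (μ / Lam) c x hmLam (by linarith)
    linarith
  · -- d < 0, b < 0
    have hbr : b / r ≤ 0 := div_nonpos_of_nonpos_of_nonneg hb.le hr.le
    rw [max_eq_right hd.le, max_eq_left (neg_nonneg.mpr hd.le),
      max_eq_right hbr, max_eq_left (neg_nonneg.mpr hbr)] at P
    have h1 : Lam * (r ^ 2 * d) + ((N:ℝ) - 1) * Lam * (r * b) + μ * a ≤ 0 := by
      have h2 := mul_le_mul_of_nonneg_right P (pow_pos hr 2).le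
      rw [zero_mul] at h2
      have e : Lam * (r ^ 2 * d) + ((N:ℝ) - 1) * Lam * (r * b) + μ * a =
        (lam * 0 - Lam * -d + ((N:ℝ) - 1) * (lam * 0 - Lam * -(b / r)) +
          μ * a * (r ^ 2)⁻¹) * r ^ 2 := by field_simp; ring
      linarith [e ▸ h2]
    have hs : r ^ 2 * d / a ≤ ((N:ℝ) - 1) * x - μ / Lam := by
      have e : ((N:ℝ) - 1) * x - μ / Lam - r ^ 2 * d / a
          = (-(Lam * (r ^ 2 * d) + ((N:ℝ) - 1) * Lam * (r * b) + μ * a)) / (Lam * a) := by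
        rw [hx]; field_simp; ring
      have h3 : (0:ℝ) ≤ (-(Lam * (r ^ 2 * d) + ((N:ℝ) - 1) * Lam * (r * b) + μ * a)) / (Lam * a) :=
        div_nonneg (by linarith) (by positivity)
      linarith [e ▸ h3]
    have Q := quad_lower ((N:ℝ) - 2) (μ / Lam) c x hmLam hcase3
    linarith

lemma hasDerivAt_U (α r : ℝ) (hr : 0 < r) :
    HasDerivAt (fun x : ℝ => x ^ (-α) * (-Real.log x))
      (-(r ^ (-α - 1)) * (α * (-Real.log r) + 1)) r := by
  have h1 : HasDerivAt (fun x : ℝ => x ^ (-α)) (-α * r ^ (-α - 1)) r :=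
    Real.hasDerivAt_rpow_const (Or.inl hr.ne')
  have h2 : HasDerivAt (fun x : ℝ => -Real.log x) (-r⁻¹) r :=
    (Real.hasDerivAt_log hr.ne').neg
  have h3 := h1.mul h2
  refine h3.congr_deriv ?_
  have e : r ^ (-α) * r⁻¹ = r ^ (-α - 1) := by
    rw [Real.rpow_sub hr, Real.rpow_one, div_eq_mul_inv]
  rw [← e]; ring

lemma hasDerivAt_U1 (α r : ℝ) (hr : 0 < r) :
    HasDerivAt (fun x : ℝ => -(x ^ (-α - 1)) * (α * (-Real.log x) + 1))
      (r ^ (-α - 2) * (α * (α + 1) * (-Real.log r) + (2 * α + 1))) r := by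
  have h1 : HasDerivAt (fun x : ℝ => -(x ^ (-α - 1))) (-((-α - 1) * r ^ (-α - 1 - 1))) r :=
    (Real.hasDerivAt_rpow_const (Or.inl hr.ne')).neg
  have h2 : HasDerivAt (fun x : ℝ => α * (-Real.log x) + 1) (α * -r⁻¹) r :=
    (((Real.hasDerivAt_log hr.ne').neg).const_mul α).add_const 1
  have h3 := h1.mul h2
  refine h3.congr_deriv ?_
  have e1 : r ^ (-α - 1 - 1) = r ^ (-α - 2) := by congr 1; ring
  have e2 : r ^ (-α - 1) * r⁻¹ = r ^ (-α - 2) := by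
    rw [show (-α - 2 : ℝ) = (-α - 1) + (-1) by ring, Real.rpow_add hr, Real.rpow_neg_one]
  rw [e1, ← e2]; ring

lemma deriv_U (α r : ℝ) (hr : 0 < r) :
    deriv (fun x : ℝ => x ^ (-α) * (-Real.log x)) r
      = -(r ^ (-α - 1)) * (α * (-Real.log r) + 1) :=
  (hasDerivAt_U α r hr).deriv

lemma deriv2_U (α r : ℝ) (hr : 0 < r) :
    deriv (deriv (fun x : ℝ => x ^ (-α) * (-Real.log x))) r
      = r ^ (-α - 2) * (α * (α + 1) * (-Real.log r) + (2 * α + 1)) := by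
  have hev : deriv (fun x : ℝ => x ^ (-α) * (-Real.log x))
      =ᶠ[nhds r] (fun x => -(x ^ (-α - 1)) * (α * (-Real.log x) + 1)) :=
    Filter.eventuallyEq_of_mem (Ioi_mem_nhds hr) (fun x hx => deriv_U α x hx)
  rw [hev.deriv_eq]
  exact (hasDerivAt_U1 α r hr).deriv

lemma pucci_eval (lam Lam : ℝ) (N : ℕ) (α : ℝ) (hα : 0 < α)
    (hrel : ((N:ℝ) - 1) * Lam = lam * (2 * α + 1))
    (r : ℝ) (hr0 : 0 < r) (hr1 : r < 1) :
    pucciM lam Lam N (fun x => x ^ (-α) * (-Real.log x)) r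
      + lam * α ^ 2 * (r ^ (-α) * (-Real.log r)) * r ^ (-(2:ℝ)) = 0 := by
  have hL : 0 < -Real.log r := by
    have := Real.log_neg hr0 hr1; linarith
  have hA : (0:ℝ) < r ^ (-α - 2) := Real.rpow_pos_of_pos hr0 _
  have hA1 : (0:ℝ) < r ^ (-α - 1) := Real.rpow_pos_of_pos hr0 _
  have hd2pos : 0 < r ^ (-α - 2) * (α * (α + 1) * (-Real.log r) + (2 * α + 1)) := by
    apply mul_pos hA
    nlinarith [mul_pos (mul_pos hα (show (0:ℝ) < α + 1 by linarith)) hL]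
  have hd1neg : -(r ^ (-α - 1)) * (α * (-Real.log r) + 1) < 0 := by
    have : 0 < α * (-Real.log r) + 1 := by nlinarith
    nlinarith
  have hq : -(r ^ (-α - 1)) * (α * (-Real.log r) + 1) / r < 0 :=
    div_neg_of_neg_of_pos hd1neg hr0
  rw [pucciM, deriv2_U α r hr0, deriv_U α r hr0,
    max_eq_left hd2pos.le, max_eq_right (neg_nonpos.mpr hd2pos.le),
    max_eq_right hq.le, max_eq_left (neg_nonneg.mpr hq.le)]
  have eA : r ^ (-α - 1) = r ^ (-α - 2) * r := by
    rw [show (-α - 1 : ℝ) = (-α - 2) + 1 by ring, Real.rpow_add hr0, Real.rpow_one]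
  have eA1 : r ^ (-α) = r ^ (-α - 1) * r := by
    have h5 := Real.rpow_add hr0 (-α - 1) 1
    rw [Real.rpow_one, show (-α - 1 + 1 : ℝ) = -α by ring] at h5
    exact h5
  have eB : r ^ (-α) = r ^ (-α - 2) * r ^ 2 := by rw [eA1, eA]; ring
  have eC : r ^ (-(2:ℝ)) = (r ^ 2)⁻¹ := by
    rw [Real.rpow_neg hr0.le, show (2:ℝ) = ((2:ℕ):ℝ) by norm_num, Real.rpow_natCast]
  rw [eA, eB, eC]
  have hr' : r ≠ 0 := hr0.ne'
  have h0 : lam * (2 * α + 1) - ((N:ℝ) - 1) * Lam = 0 := by linarith [hrel]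
  have hinv : r * r⁻¹ = 1 := mul_inv_cancel₀ hr'
  linear_combination (r ^ (-α - 2) * (α * (-Real.log r) + 1)) * h0 +
    (-((N:ℝ) - 1) * Lam * r ^ (-α - 2) * (α * (-Real.log r) + 1) +
      lam * α ^ 2 * r ^ (-α - 2) * (-Real.log r) * (r * r⁻¹ + 1)) * hinv

set_option maxHeartbeats 2000000 in
theorem stmt3 (N : ℕ) (hN : 2 ≤ N) (lam Lam : ℝ) (hlam : 0 < lam) (hlL : lam ≤ Lam)
    (hNp : 2 < lam / Lam * ((N : ℝ) - 1) + 1)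
    (Nm : ℝ) (hNmdef : Nm = Lam / lam * ((N : ℝ) - 1) + 1) :
    radialEVop (pucciM lam Lam N) 2 = lam * (Nm - 2) ^ 2 / 4 ∧
    (∀ r ∈ Ioo (0:ℝ) 1, 0 < r ^ (-((Nm - 2) / 2)) * (-Real.log r)) ∧
    ((1:ℝ) ^ (-((Nm - 2) / 2)) * (-Real.log 1) = 0) ∧
    (∀ r ∈ Ioo (0:ℝ) 1,
      pucciM lam Lam N (fun r => r ^ (-((Nm - 2) / 2)) * (-Real.log r)) r
        + lam * ((Nm - 2) / 2) ^ 2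
          * (r ^ (-((Nm - 2) / 2)) * (-Real.log r)) * r ^ (-(2:ℝ)) = 0) := by
  have hLam : 0 < Lam := lt_of_lt_of_le hlam hlL
  set α : ℝ := (Nm - 2) / 2 with hαdef
  have hqge : 1 ≤ Lam / lam := (one_le_div hlam).mpr hlL
  have hNR : (2:ℝ) ≤ (N:ℝ) := by exact_mod_cast hN
  have hNL : Lam < lam * ((N:ℝ) - 1) := by
    have h6 : 1 < lam * ((N:ℝ) - 1) / Lam := by
      have := hNp; rw [div_mul_eq_mul_div] at this; linarith
    exact (one_lt_div hLam).mp h6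
  have hN2' : (2:ℝ) < (N:ℝ) := by nlinarith
  have h7 : (N:ℝ) - 1 ≤ Lam / lam * ((N:ℝ) - 1) :=
    le_mul_of_one_le_left (by linarith) hqge
  have hα0 : 0 < α := by
    rw [hαdef, hNmdef]; nlinarith
  have hrel : ((N:ℝ) - 1) * Lam = lam * (2 * α + 1) := by
    rw [hαdef, hNmdef]
    field_simp
    ring
  have hα2 : 2 * α + 1 = ((N:ℝ) - 1) * Lam / lam := by
    rw [eq_div_iff hlam.ne']
    linarith [hrel]
  have hαge : ((N:ℝ) - 2) / 2 ≤ α := by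
    rw [hαdef, hNmdef]; linarith
  have hNt : 0 < ((N:ℝ) - 1) * lam / Lam - 1 := by
    have e : ((N:ℝ) - 1) * lam / Lam = lam / Lam * ((N:ℝ) - 1) := by ring
    rw [e]; linarith
  -- the explicit eigenfunction
  have hpos : ∀ r ∈ Ioo (0:ℝ) 1, 0 < r ^ (-α) * (-Real.log r) := by
    intro r hr
    have hL : 0 < -Real.log r := by
      have := Real.log_neg hr.1 hr.2; linarith
    exact mul_pos (Real.rpow_pos_of_pos hr.1 _) hL
  have heval : ∀ r ∈ Ioo (0:ℝ) 1,
      pucciM lam Lam N (fun x => x ^ (-α) * (-Real.log x)) r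
        + lam * α ^ 2 * (r ^ (-α) * (-Real.log r)) * r ^ (-(2:ℝ)) = 0 :=
    fun r hr => pucci_eval lam Lam N α hα0 hrel r hr.1 hr.2
  have hkey : Lam * ((N:ℝ) - 2) ^ 2 ≤ lam * (2 * α) ^ 2 := by
    have h2α : lam * (2 * α) = ((N:ℝ) - 1) * Lam - lam := by linarith [hrel]
    have h2sq : (lam * (2 * α)) ^ 2 = (((N:ℝ) - 1) * Lam - lam) ^ 2 := by rw [h2α]
    have hsq : (((N:ℝ) - 1) * Lam - lam) ^ 2 - lam * Lam * ((N:ℝ) - 2) ^ 2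
        = (Lam - lam) * (Lam * ((N:ℝ) - 1) ^ 2 - lam) := by ring
    have hfacpos : 0 ≤ (Lam - lam) * (Lam * ((N:ℝ) - 1) ^ 2 - lam) :=
      mul_nonneg (by linarith) (by nlinarith)
    have hexp : lam * (lam * (2 * α) ^ 2) = (lam * (2 * α)) ^ 2 := by ring
    have hexp2 : lam * (Lam * ((N:ℝ) - 2) ^ 2) = lam * Lam * ((N:ℝ) - 2) ^ 2 := by ring
    have hkey2 : lam * (Lam * ((N:ℝ) - 2) ^ 2) ≤ lam * (lam * (2 * α) ^ 2) := by
      linarith [hsq, hfacpos, h2sq, hexp, hexp2]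
    exact (mul_le_mul_iff_right₀ hlam).mp hkey2
  refine ⟨?_, hpos, by simp, heval⟩
  -- the eigenvalue
  have hμeq : lam * (Nm - 2) ^ 2 / 4 = lam * α ^ 2 := by rw [hαdef]; ring
  rw [radialEVop, hμeq]
  have hmem : lam * α ^ 2 ∈ {μ : ℝ | ∃ u : ℝ → ℝ, ContDiffOn ℝ 2 u (Ioo 0 1) ∧
      (∀ r ∈ Ioo (0:ℝ) 1, 0 < u r) ∧
      (∀ r ∈ Ioo (0:ℝ) 1, pucciM lam Lam N u r + (lam * α ^ 2) * u r * r ^ (-(2:ℝ)) ≤ 0)} := by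
    refine ⟨fun x => x ^ (-α) * (-Real.log x), ?_, hpos, ?_⟩
    · intro r hr
      exact ((Real.contDiffAt_rpow_const_of_ne hr.1.ne').mul
        ((Real.contDiffAt_log.mpr hr.1.ne').neg)).contDiffWithinAt
    · intro r hr
      have := heval r hr
      have e : lam * α ^ 2 * ((fun x : ℝ => x ^ (-α) * (-Real.log x)) r) * r ^ (-(2:ℝ))
          = lam * α ^ 2 * (r ^ (-α) * (-Real.log r)) * r ^ (-(2:ℝ)) := rfl
      linarith [this]
  have hub : ∀ μ ∈ {μ : ℝ | ∃ u : ℝ → ℝ, ContDiffOn ℝ 2 u (Ioo 0 1) ∧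
      (∀ r ∈ Ioo (0:ℝ) 1, 0 < u r) ∧
      (∀ r ∈ Ioo (0:ℝ) 1, pucciM lam Lam N u r + μ * u r * r ^ (-(2:ℝ)) ≤ 0)},
      μ ≤ lam * α ^ 2 := by
    rintro μ ⟨u, hC, hupos, hineq⟩
    by_contra hcon
    push_neg at hcon
    -- hcon : lam * α ^ 2 < μ
    have hμpos : 0 < μ := lt_of_le_of_lt (by positivity) hcon
    have hc1' : α ^ 2 < μ / lam := by rw [lt_div_iff₀ hlam]; nlinarith
    have hc3' : ((N:ℝ) - 2) ^ 2 / 4 < μ / Lam := by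
      rw [div_lt_div_iff₀ (by norm_num) hLam]; nlinarith
    set c : ℝ := min ((μ / lam - α ^ 2) / (1 + μ / lam))
      ((μ / Lam - ((N:ℝ) - 2) ^ 2 / 4) / (1 + μ / Lam)) with hcdef
    have hmlam : (0:ℝ) < μ / lam := div_pos hμpos hlam
    have hmLam : (0:ℝ) < μ / Lam := div_pos hμpos hLam
    have hc0 : 0 < c := lt_min (div_pos (by linarith) (by linarith))
      (div_pos (by linarith) (by linarith))
    have hcase1 : c * (1 + μ / lam) ≤ μ / lam - α ^ 2 := by
      calc c * (1 + μ / lam)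
          ≤ ((μ / lam - α ^ 2) / (1 + μ / lam)) * (1 + μ / lam) :=
            mul_le_mul_of_nonneg_right (min_le_left _ _) (by linarith)
        _ = μ / lam - α ^ 2 := div_mul_cancel₀ _ (by linarith)
    have hcase3 : c * (1 + μ / Lam) ≤ μ / Lam - ((N:ℝ) - 2) ^ 2 / 4 := by
      calc c * (1 + μ / Lam)
          ≤ ((μ / Lam - ((N:ℝ) - 2) ^ 2 / 4) / (1 + μ / Lam)) * (1 + μ / Lam) :=
            mul_le_mul_of_nonneg_right (min_le_right _ _) (by linarith)
        _ = μ / Lam - ((N:ℝ) - 2) ^ 2 / 4 := div_mul_cancel₀ _ (by linarith)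
    -- derivatives of u
    have hu1 : ∀ r ∈ Ioo (0:ℝ) 1, HasDerivAt u (deriv u r) r := by
      intro r hr
      exact (((hC.differentiableOn (by norm_num)) r hr).differentiableAt
        (Ioo_mem_nhds hr.1 hr.2)).hasDerivAt
    have hu2 : ContDiffOn ℝ 1 (deriv u) (Ioo 0 1) :=
      hC.deriv_of_isOpen isOpen_Ioo (by norm_num)
    have hu2' : ∀ r ∈ Ioo (0:ℝ) 1, HasDerivAt (deriv u) (deriv (deriv u) r) r := by
      intro r hr
      exact (((hu2.differentiableOn (by norm_num)) r hr).differentiableAt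
        (Ioo_mem_nhds hr.1 hr.2)).hasDerivAt
    have hd : ∀ r ∈ Ioo (0:ℝ) 1, HasDerivAt (fun y => -(y * deriv u y) / u y)
        ((-(1 * deriv u r + r * deriv (deriv u) r) * u r - -(r * deriv u r) * deriv u r)
          / u r ^ 2) r := by
      intro r hr
      exact (((hasDerivAt_id r).mul (hu2' r hr)).neg).div (hu1 r hr) (hupos r hr).ne'
    have key : ∀ r ∈ Ioo (0:ℝ) 1, c * (1 + (-(r * deriv u r) / u r) ^ 2) ≤
        r * ((-(1 * deriv u r + r * deriv (deriv u) r) * u r - -(r * deriv u r) * deriv u r)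
          / u r ^ 2) := by
      intro r hr
      refine riccati_step lam Lam N μ c α hlam hlL hNR hNt hα2 hαge hμpos hcase1 hcase3
        (u r) (deriv u r) (deriv (deriv u) r) r (hupos r hr) hr.1 ?_
      have := hineq r hr
      rw [pucciM] at this
      linarith
    -- the Lyapunov function
    set φ : ℝ → ℝ := fun y => Real.arctan (-(y * deriv u y) / u y) - c * Real.log y with hφdef
    have hφd : ∀ r ∈ Ioo (0:ℝ) 1, HasDerivAt φ
        (1 / (1 + (-(r * deriv u r) / u r) ^ 2) *
          ((-(1 * deriv u r + r * deriv (deriv u) r) * u r - -(r * deriv u r) * deriv u r)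
            / u r ^ 2) - c * r⁻¹) r := by
      intro r hr
      exact ((hd r hr).arctan).sub ((Real.hasDerivAt_log hr.1.ne').const_mul c)
    have hφ0 : ∀ r ∈ Ioo (0:ℝ) 1, 0 ≤
        1 / (1 + (-(r * deriv u r) / u r) ^ 2) *
          ((-(1 * deriv u r + r * deriv (deriv u) r) * u r - -(r * deriv u r) * deriv u r)
            / u r ^ 2) - c * r⁻¹ := by
      intro r hr
      have hden : (0:ℝ) < 1 + (-(r * deriv u r) / u r) ^ 2 := by positivity
      have hk := key r hr
      set X : ℝ := -(r * deriv u r) / u r with hX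
      set D : ℝ := (-(1 * deriv u r + r * deriv (deriv u) r) * u r - -(r * deriv u r) * deriv u r)
        / u r ^ 2 with hD
      rw [sub_nonneg, show (1:ℝ) / (1 + X ^ 2) * D = D / (1 + X ^ 2) by ring,
        show c * r⁻¹ = c / r by ring]
      rw [div_le_div_iff₀ hr.1 hden]
      linarith [hk]
    -- contradiction by integrating the Riccati inequality
    set K : ℝ := π / c + 1 + Real.log 2 with hKdef
    have hlog2 : (0:ℝ) < Real.log 2 := Real.log_pos (by norm_num)
    have hπc : 0 < π / c := div_pos Real.pi_pos hc0
    set r₀ : ℝ := Real.exp (-K) with hr₀def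
    have hr₀0 : 0 < r₀ := Real.exp_pos _
    have hr₀half : r₀ < 1 / 2 := by
      rw [show (1/2 : ℝ) = Real.exp (Real.log (1/2)) from (Real.exp_log (by norm_num)).symm]
      apply Real.exp_lt_exp.mpr
      rw [show Real.log (1/2 : ℝ) = -Real.log 2 by rw [one_div, Real.log_inv]]
      rw [hKdef]; linarith
    have hsub : Icc r₀ (1/2 : ℝ) ⊆ Ioo (0:ℝ) 1 := fun x hx =>
      ⟨lt_of_lt_of_le hr₀0 hx.1, lt_of_le_of_lt hx.2 (by norm_num)⟩
    have hmono : MonotoneOn φ (Icc r₀ (1/2)) := by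
      apply monotoneOn_of_deriv_nonneg (convex_Icc _ _)
      · exact fun x hx => (hφd x (hsub hx)).continuousAt.continuousWithinAt
      · intro x hx
        rw [interior_Icc] at hx
        exact ((hφd x (hsub (Ioo_subset_Icc_self hx))).differentiableAt).differentiableWithinAt
      · intro x hx
        rw [interior_Icc] at hx
        rw [(hφd x (hsub (Ioo_subset_Icc_self hx))).deriv]
        exact hφ0 x (hsub (Ioo_subset_Icc_self hx))
    have hcomp := hmono (left_mem_Icc.mpr hr₀half.le) (right_mem_Icc.mpr hr₀half.le) hr₀half.le
    simp only [hφdef] at hcomp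
    rw [Real.log_exp] at hcomp
    rw [show Real.log (1/2 : ℝ) = -Real.log 2 by rw [one_div, Real.log_inv]] at hcomp
    have harc1 : -(π/2) < Real.arctan (-(r₀ * deriv u r₀) / u r₀) :=
      Real.neg_pi_div_two_lt_arctan _
    have harc2 : Real.arctan (-((1/2 : ℝ) * deriv u (1/2)) / u (1/2)) < π / 2 :=
      Real.arctan_lt_pi_div_two _
    have hcK : c * K = π + c + c * Real.log 2 := by
      rw [hKdef]; field_simp
    have hrw : c * -K = -(π + c + c * Real.log 2) := by rw [← hcK]; ring
    rw [hrw] at hcomp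
    linarith [hcomp, harc1, harc2, hc0]
  exact le_antisymm (csSup_le ⟨lam * α ^ 2, hmem⟩ hub) (le_csSup ⟨lam * α ^ 2, hub⟩ hmem)

end
end

section
/- Let 0 < γ < 2, let f : (0,1) → ℝ be continuous, bounded and everywhere positive, and let u : (0,1) → ℝ be a bounded C² function satisfying 𝓜⁺[u](r) ≥ f(r)·r^{−γ} for all r ∈ (0,1). Then there exists r₀ ∈ (0,1) such that u'(r) ≥ 0 for all r ∈ (0,r₀); moreover lim_{r→0⁺} u'(r)·r^{Ñ₋−1} = 0 and u'(r) ≥ (inf_{(0,1)} f)/(Λ·(Ñ₋−γ))·r^{1−γ} for all r ∈ (0,r₀). -/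
open Set Real Filter MeasureTheory

noncomputable section

lemma aux_rpow_tendsto {p : ℝ} (hp : p < 0) :
    Tendsto (fun x : ℝ => x ^ p) (nhdsWithin 0 (Ioi 0)) atTop := by
  have h1 : Tendsto (fun x : ℝ => (x⁻¹) ^ (-p)) (nhdsWithin 0 (Ioi 0)) atTop :=
    (tendsto_rpow_atTop (by linarith)).comp tendsto_inv_nhdsGT_zero
  refine h1.congr' ?_
  filter_upwards [self_mem_nhdsWithin] with x hx
  have hx0 : (0:ℝ) < x := hx
  rw [Real.inv_rpow hx0.le, ← Real.rpow_neg hx0.le, neg_neg]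

lemma aux_blowup (v : ℝ → ℝ) (C c β r₁ : ℝ) (hβ : 1 < β) (hc : 0 < c)
    (hr₁ : r₁ ∈ Ioo (0:ℝ) 1)
    (hv : DifferentiableOn ℝ v (Ioo 0 1))
    (hd : ∀ x ∈ Ioo (0:ℝ) r₁, deriv v x ≤ -c * x ^ (-β))
    (hb : ∀ r ∈ Ioo (0:ℝ) 1, |v r| ≤ C) : False := by
  set K := c / (β - 1) with hK
  have hKpos : 0 < K := div_pos hc (by linarith)
  have key : ∀ r ∈ Ioo (0:ℝ) r₁, v r₁ - K * r₁ ^ (1-β) + K * r ^ (1-β) ≤ v r := by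
    intro r hr
    have hsub : Icc r r₁ ⊆ Ioo (0:ℝ) 1 :=
      fun x hx => ⟨lt_of_lt_of_le hr.1 hx.1, lt_of_le_of_lt hx.2 hr₁.2⟩
    set w : ℝ → ℝ := fun x => v x - K * x ^ (1 - β) with hw
    have hder : ∀ x ∈ Ioo r r₁,
        HasDerivAt w (deriv v x - K * ((1-β) * x ^ (1-β-1))) x := by
      intro x hx
      have hx1 : x ∈ Ioo (0:ℝ) 1 := hsub ⟨hx.1.le, hx.2.le⟩
      have h1 : HasDerivAt v (deriv v x) x :=
        (hv.differentiableAt (isOpen_Ioo.mem_nhds hx1)).hasDerivAt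
      have h2 : HasDerivAt (fun x : ℝ => x ^ (1-β)) ((1-β) * x ^ (1-β-1)) x :=
        Real.hasDerivAt_rpow_const (Or.inl (ne_of_gt hx1.1))
      exact h1.sub (h2.const_mul K)
    have hanti : AntitoneOn w (Icc r r₁) := by
      apply antitoneOn_of_deriv_nonpos (convex_Icc r r₁)
      · apply ContinuousOn.sub (hv.continuousOn.mono hsub)
        apply ContinuousOn.mul continuousOn_const
        apply ContinuousOn.rpow_const continuousOn_id
        intro x hx
        exact Or.inl (ne_of_gt (hsub hx).1)
      · rw [interior_Icc]
        exact fun x hx => (hder x hx).differentiableAt.differentiableWithinAt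
      · intro x hx
        rw [interior_Icc] at hx
        rw [(hder x hx).deriv]
        have hx1 : x ∈ Ioo (0:ℝ) r₁ := ⟨hr.1.trans hx.1, hx.2⟩
        have h3 := hd x hx1
        have he : (1:ℝ) - β - 1 = -β := by ring
        have hKc : K * (1 - β) = -c := by
          rw [hK, div_mul_eq_mul_div, div_eq_iff (show β - 1 ≠ 0 by linarith)]; ring
        rw [he]
        nlinarith [Real.rpow_pos_of_pos (hr.1.trans hx.1) (-β)]
    have h4 := hanti ⟨le_refl r, hr.2.le⟩ ⟨hr.2.le, le_refl r₁⟩ hr.2.le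
    simp only [hw] at h4
    linarith
  have htop : Tendsto (fun x : ℝ => x ^ (1-β)) (nhdsWithin 0 (Ioi 0)) atTop :=
    aux_rpow_tendsto (by linarith)
  have hev : ∀ᶠ x in nhdsWithin (0:ℝ) (Ioi 0),
      (C - (v r₁ - K * r₁ ^ (1-β)) + 1) / K < x ^ (1-β) :=
    htop.eventually_gt_atTop _
  have hev2 : Ioo (0:ℝ) r₁ ∈ nhdsWithin (0:ℝ) (Ioi 0) :=
    Ioo_mem_nhdsGT_of_mem ⟨le_refl 0, hr₁.1⟩
  obtain ⟨r, hrgt, hrm⟩ := (hev.and (eventually_mem_set.mpr hev2)).exists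
  have hrIoo1 : r ∈ Ioo (0:ℝ) 1 := ⟨hrm.1, hrm.2.trans hr₁.2⟩
  have h1 := key r hrm
  have h2 := (abs_le.mp (hb r hrIoo1)).2
  have h3 : K * ((C - (v r₁ - K * r₁^(1-β)) + 1)/K) < K * r^(1-β) :=
    mul_lt_mul_of_pos_left hrgt hKpos
  rw [mul_div_cancel₀ _ (ne_of_gt hKpos)] at h3
  linarith

set_option maxHeartbeats 1000000 in
theorem stmt7 (N : ℕ) (hN : 2 ≤ N) (lam Lam : ℝ) (hlam : 0 < lam) (hlL : lam ≤ Lam)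
    (hNp : 2 < lam / Lam * ((N : ℝ) - 1) + 1)
    (Nm : ℝ) (hNmdef : Nm = Lam / lam * ((N : ℝ) - 1) + 1)
    (γ : ℝ) (hγ0 : 0 < γ) (hγ2 : γ < 2)
    (f : ℝ → ℝ) (hfc : ContinuousOn f (Ioo 0 1))
    (hfb : ∃ C : ℝ, ∀ r ∈ Ioo (0:ℝ) 1, |f r| ≤ C)
    (hfpos : ∀ r ∈ Ioo (0:ℝ) 1, 0 < f r)
    (u : ℝ → ℝ) (hu : ContDiffOn ℝ 2 u (Ioo 0 1))
    (hub : ∃ C : ℝ, ∀ r ∈ Ioo (0:ℝ) 1, |u r| ≤ C)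
    (hineq : ∀ r ∈ Ioo (0:ℝ) 1, f r * r ^ (-γ) ≤ pucciP lam Lam N u r) :
    ∃ r₀ ∈ Ioo (0:ℝ) 1,
      (∀ r ∈ Ioo (0:ℝ) r₀, 0 ≤ deriv u r) ∧
      Tendsto (fun r => deriv u r * r ^ (Nm - 1)) (nhdsWithin 0 (Ioi 0)) (nhds 0) ∧
      (∀ r ∈ Ioo (0:ℝ) r₀,
        sInf (f '' Ioo 0 1) / (Lam * (Nm - γ)) * r ^ (1 - γ) ≤ deriv u r) := by
  obtain ⟨C, hubC⟩ := hub
  have hLam : 0 < Lam := lt_of_lt_of_le hlam hlL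
  have hNR : (2:ℝ) ≤ (N:ℝ) := by exact_mod_cast hN
  set β := lam / Lam * ((N:ℝ) - 1) with hβdef
  have hβ1 : 1 < β := by linarith
  have hβle : β ≤ (N:ℝ) - 1 := by
    rw [hβdef, div_mul_eq_mul_div, div_le_iff₀ hLam]
    nlinarith
  set α := Nm - 1 with hα
  have hαval : α = Lam / lam * ((N:ℝ)-1) := by rw [hα, hNmdef]; ring
  have hαge : (N:ℝ) - 1 ≤ α := by
    rw [hαval]
    have h1 : 1 ≤ Lam / lam := (one_le_div hlam).mpr hlL
    nlinarith
  have hα1 : 1 < α := lt_of_lt_of_le (hβ1.trans_le hβle) hαge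
  have hNm2 : 2 < Nm := by rw [hα] at hα1; linarith
  -- regularity
  have hud : DifferentiableOn ℝ u (Ioo 0 1) := hu.differentiableOn (by norm_num)
  have hu1 : ContDiffOn ℝ 1 (deriv u) (Ioo 0 1) :=
    hu.deriv_of_isOpen isOpen_Ioo (by norm_num)
  have hu'd : DifferentiableOn ℝ (deriv u) (Ioo 0 1) := hu1.differentiableOn (by norm_num)
  have hu'c : ContinuousOn (deriv u) (Ioo 0 1) := hu'd.continuousOn
  have hfx : ∀ x ∈ Ioo (0:ℝ) 1, 0 < f x * x ^ (-γ) :=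
    fun x hx => mul_pos (hfpos x hx) (Real.rpow_pos_of_pos hx.1 _)
  -- pointwise consequence where u' < 0
  have keyneg : ∀ x ∈ Ioo (0:ℝ) 1, deriv u x < 0 →
      0 < deriv (deriv u) x ∧
      f x * x ^ (-γ) / Lam ≤ deriv (deriv u) x + β * (deriv u x / x) := by
    intro x hx hneg
    have hi := hineq x hx
    rw [pucciP] at hi
    set A := deriv (deriv u) x with hA
    set B := deriv u x / x with hB
    have hB0 : B < 0 := div_neg_of_neg_of_pos hneg hx.1
    rw [max_eq_right hB0.le, max_eq_left (by linarith : (0:ℝ) ≤ -B)] at hi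
    have hf0 := hfx x hx
    have hApos : 0 < A := by
      by_contra h
      push_neg at h
      rw [max_eq_right h, max_eq_left (neg_nonneg.2 h)] at hi
      nlinarith [mul_nonpos_of_nonneg_of_nonpos hlam.le h,
        mul_nonneg hlam.le (neg_nonneg.2 hB0.le)]
    rw [max_eq_left hApos.le, max_eq_right (neg_nonpos.2 hApos.le)] at hi
    refine ⟨hApos, ?_⟩
    rw [div_le_iff₀ hLam]
    have he : (A + β * B) * Lam = Lam * A + lam * ((N:ℝ)-1) * B := by
      rw [hβdef]; field_simp
    rw [he]
    nlinarith
  -- pointwise consequence where u' ≥ 0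
  have key : ∀ x ∈ Ioo (0:ℝ) 1, 0 ≤ deriv u x →
      f x * x ^ (-γ) / Lam ≤ deriv (deriv u) x + α * (deriv u x / x) := by
    intro x hx hnn
    have hi := hineq x hx
    rw [pucciP] at hi
    set A := deriv (deriv u) x with hA
    set B := deriv u x / x with hB
    have hB0 : 0 ≤ B := div_nonneg hnn hx.1.le
    rw [max_eq_left hB0, max_eq_right (by linarith : -B ≤ (0:ℝ))] at hi
    have hf0 := hfx x hx
    rw [div_le_iff₀ hLam]
    rcases le_or_gt 0 A with hA0 | hA0
    · rw [max_eq_left hA0, max_eq_right (neg_nonpos.2 hA0)] at hi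
      -- hi : f x * x^(-γ) ≤ Lam * A - lam * 0 + (N-1)*(Lam * B - lam * 0)
      nlinarith [mul_nonneg (mul_nonneg hLam.le hB0) (sub_nonneg.2 hαge)]
    · rw [max_eq_right hA0.le, max_eq_left (neg_nonneg.2 hA0.le)] at hi
      -- hi : f x * x^(-γ) ≤ Lam * 0 - lam * (-A) + (N-1)*(Lam * B - lam * 0)
      have h1 : f x * x ^ (-γ) ≤ (A + α * B) * lam := by
        have he : (A + α * B) * lam = lam * A + Lam * ((N:ℝ)-1) * B := by
          rw [hαval]; field_simp
        rw [he]; nlinarith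
      have h2 : 0 < A + α * B := by
        by_contra hnot
        push_neg at hnot
        have := mul_nonpos_of_nonpos_of_nonneg hnot hlam.le
        linarith
      calc f x * x ^ (-γ) ≤ (A + α * B) * lam := h1
        _ ≤ (A + α * B) * Lam := mul_le_mul_of_nonneg_left hlL h2.le
  -- Step 1 : u' ≥ 0 on (0,1)
  have hpos : ∀ r ∈ Ioo (0:ℝ) 1, 0 ≤ deriv u r := by
    by_contra hcon
    push_neg at hcon
    obtain ⟨r₁, hr₁, hneg⟩ := hcon
    have hall : ∀ x ∈ Ioc (0:ℝ) r₁, deriv u x < 0 := by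
      by_contra hc2
      push_neg at hc2
      obtain ⟨s, hs, hs0⟩ := hc2
      have hsr : s < r₁ := lt_of_le_of_ne hs.2 (by rintro rfl; exact absurd hs0 (not_le.2 hneg))
      set A := {t : ℝ | t ∈ Icc s r₁ ∧ 0 ≤ deriv u t} with hAdef
      have hAne : A.Nonempty := ⟨s, ⟨le_refl s, hsr.le⟩, hs0⟩
      have hAbdd : BddAbove A := ⟨r₁, fun t ht => ht.1.2⟩
      set t := sSup A with ht
      have htmem : t ∈ Icc s r₁ :=
        ⟨le_csSup hAbdd ⟨⟨le_refl s, hsr.le⟩, hs0⟩, csSup_le hAne (fun x hx => hx.1.2)⟩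
      have htIoo : t ∈ Ioo (0:ℝ) 1 :=
        ⟨lt_of_lt_of_le hs.1 htmem.1, lt_of_le_of_lt htmem.2 hr₁.2⟩
      have hut : 0 ≤ deriv u t := by
        obtain ⟨seq, _, hseqtend, hseqmem⟩ := exists_seq_tendsto_sSup hAne hAbdd
        have hcont : ContinuousAt (deriv u) t :=
          (hu'd.differentiableAt (isOpen_Ioo.mem_nhds htIoo)).continuousAt
        exact ge_of_tendsto (hcont.tendsto.comp hseqtend)
          (Eventually.of_forall fun n => (hseqmem n).2)
      have htr : t < r₁ :=
        lt_of_le_of_ne htmem.2 (fun heq => absurd hut (by rw [heq]; exact not_le.2 hneg))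
      have hmono : StrictMonoOn (deriv u) (Icc t r₁) := by
        apply strictMonoOn_of_deriv_pos (convex_Icc t r₁)
        · exact hu'c.mono (fun x hx => ⟨lt_of_lt_of_le htIoo.1 hx.1, lt_of_le_of_lt hx.2 hr₁.2⟩)
        · intro x hx
          rw [interior_Icc] at hx
          have hxI : x ∈ Ioo (0:ℝ) 1 := ⟨htIoo.1.trans hx.1, hx.2.trans hr₁.2⟩
          have hxneg : deriv u x < 0 := by
            by_contra h
            push_neg at h
            have hxA : x ∈ A := ⟨⟨htmem.1.trans hx.1.le, hx.2.le⟩, h⟩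
            exact absurd (le_csSup hAbdd hxA) (not_le.2 hx.1)
          exact (keyneg x hxI hxneg).1
      have := hmono (left_mem_Icc.2 htr.le) (right_mem_Icc.2 htr.le) htr
      linarith
    set c := -(deriv u r₁ * r₁ ^ β) with hc
    have hcpos : 0 < c := by
      have := mul_neg_of_neg_of_pos hneg (Real.rpow_pos_of_pos hr₁.1 β)
      linarith
    have hbound : ∀ x ∈ Ioo (0:ℝ) r₁, deriv u x ≤ -c * x ^ (-β) := by
      intro r hr
      have hsub : Icc r r₁ ⊆ Ioo (0:ℝ) 1 :=
        fun x hx => ⟨lt_of_lt_of_le hr.1 hx.1, lt_of_le_of_lt hx.2 hr₁.2⟩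
      set φ : ℝ → ℝ := fun x => deriv u x * x ^ β with hφ
      have hder : ∀ x ∈ Ioo r r₁,
          HasDerivAt φ (deriv (deriv u) x * x^β + deriv u x * (β * x^(β-1))) x := by
        intro x hx
        have hxI : x ∈ Ioo (0:ℝ) 1 := hsub ⟨hx.1.le, hx.2.le⟩
        exact ((hu'd.differentiableAt (isOpen_Ioo.mem_nhds hxI)).hasDerivAt).mul
          (Real.hasDerivAt_rpow_const (Or.inl (ne_of_gt hxI.1)))
      have hmono : MonotoneOn φ (Icc r r₁) := by
        apply monotoneOn_of_deriv_nonneg (convex_Icc r r₁)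
        · apply ContinuousOn.mul (hu'c.mono hsub)
          apply ContinuousOn.rpow_const continuousOn_id
          intro x hx
          exact Or.inl (ne_of_gt (hsub hx).1)
        · rw [interior_Icc]
          exact fun x hx => (hder x hx).differentiableAt.differentiableWithinAt
        · intro x hx
          rw [interior_Icc] at hx
          rw [(hder x hx).deriv]
          have hxI : x ∈ Ioo (0:ℝ) 1 := hsub ⟨hx.1.le, hx.2.le⟩
          have hxneg : deriv u x < 0 := hall x ⟨hxI.1, hx.2.le⟩
          have hk := (keyneg x hxI hxneg).2
          have hx0 : 0 < x := hxI.1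
          have hxβ : 0 < x ^ β := Real.rpow_pos_of_pos hx0 β
          have heq : deriv (deriv u) x * x^β + deriv u x * (β * x^(β-1)) =
              x^β * (deriv (deriv u) x + β * (deriv u x / x)) := by
            rw [Real.rpow_sub hx0, Real.rpow_one]
            ring
          rw [heq]
          have hfnn : 0 ≤ f x * x^(-γ)/Lam :=
            div_nonneg (hfx x hxI).le hLam.le
          exact mul_nonneg hxβ.le (le_trans hfnn hk)
      have h1 := hmono ⟨le_refl r, hr.2.le⟩ ⟨hr.2.le, le_refl r₁⟩ hr.2.le
      simp only [hφ] at h1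
      have hrβ : 0 < r ^ β := Real.rpow_pos_of_pos hr.1 β
      have h2 : -c * r ^ (-β) * r ^ β = -c := by
        rw [mul_assoc, ← Real.rpow_add hr.1]
        norm_num
      have h3 : deriv u r * r ^ β ≤ -c * r ^ (-β) * r ^ β := by
        rw [h2, hc, neg_neg]; exact h1
      exact le_of_mul_le_mul_right h3 hrβ
    exact aux_blowup u C c β r₁ hβ1 hcpos hr₁ hud hbound hubC
  -- Step 2 : h := u' r^α, monotone, tends to 0
  set h : ℝ → ℝ := fun r => deriv u r * r ^ α with hhdef
  have hDer : ∀ x ∈ Ioo (0:ℝ) 1,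
      HasDerivAt h (deriv (deriv u) x * x^α + deriv u x * (α * x^(α-1))) x := by
    intro x hx
    exact ((hu'd.differentiableAt (isOpen_Ioo.mem_nhds hx)).hasDerivAt).mul
      (Real.hasDerivAt_rpow_const (Or.inl (ne_of_gt hx.1)))
  have hderive_ge : ∀ x ∈ Ioo (0:ℝ) 1, f x * x ^ (α - γ) / Lam ≤ deriv h x := by
    intro x hx
    rw [(hDer x hx).deriv]
    have hk := key x hx (hpos x hx)
    have hx0 : 0 < x := hx.1
    have hxα : 0 < x ^ α := Real.rpow_pos_of_pos hx0 α
    have heq : deriv (deriv u) x * x^α + deriv u x * (α * x^(α-1)) =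
        x^α * (deriv (deriv u) x + α * (deriv u x / x)) := by
      rw [show x ^ (α-1) = x ^ α / x by rw [Real.rpow_sub hx0, Real.rpow_one]]
      generalize x ^ α = X
      field_simp
    rw [heq]
    have he2 : f x * x ^ (α - γ) / Lam = x^α * (f x * x^(-γ)/Lam) := by
      rw [show α - γ = α + -γ by ring, Real.rpow_add hx0]
      ring
    rw [he2]
    exact mul_le_mul_of_nonneg_left hk hxα.le
  have hder_nonneg : ∀ x ∈ Ioo (0:ℝ) 1, 0 ≤ deriv h x := by
    intro x hx
    refine le_trans ?_ (hderive_ge x hx)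
    exact div_nonneg (mul_nonneg (hfpos x hx).le (Real.rpow_nonneg hx.1.le _)) hLam.le
  have hmonoh : MonotoneOn h (Ioo (0:ℝ) 1) := by
    apply monotoneOn_of_deriv_nonneg (convex_Ioo 0 1)
    · exact fun x hx => ((hDer x hx).differentiableAt.continuousAt).continuousWithinAt
    · rw [interior_Ioo]
      exact fun x hx => (hDer x hx).differentiableAt.differentiableWithinAt
    · rw [interior_Ioo]
      exact hder_nonneg
  have hhnn : ∀ x ∈ Ioo (0:ℝ) 1, 0 ≤ h x :=
    fun x hx => mul_nonneg (hpos x hx) (Real.rpow_nonneg hx.1.le _)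
  have hbddh : BddBelow (h '' Ioo 0 1) := by
    refine ⟨0, ?_⟩
    rintro y ⟨x, hx, rfl⟩
    exact hhnn x hx
  have htendL : Tendsto h (nhdsWithin 0 (Ioi 0)) (nhds (sInf (h '' Ioo 0 1))) :=
    MonotoneOn.tendsto_nhdsWithin_Ioo_right ⟨1/2, by norm_num⟩ hmonoh hbddh
  have hL0 : 0 ≤ sInf (h '' Ioo 0 1) := by
    apply le_csInf (Nonempty.image h ⟨1/2, by norm_num⟩)
    rintro y ⟨x, hx, rfl⟩
    exact hhnn x hx
  have hLle : sInf (h '' Ioo 0 1) ≤ 0 := by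
    by_contra hcL
    push_neg at hcL
    have hLb : ∀ x ∈ Ioo (0:ℝ) 1, sInf (h '' Ioo 0 1) ≤ h x :=
      fun x hx => csInf_le hbddh (mem_image_of_mem h hx)
    apply aux_blowup (fun y => -u y) C (sInf (h '' Ioo 0 1)) α (1/2 : ℝ) hα1 hcL
      (by constructor <;> norm_num) hud.neg ?_ ?_
    · intro x hx
      have hxI : x ∈ Ioo (0:ℝ) 1 := ⟨hx.1, hx.2.trans (by norm_num)⟩
      have hxα : 0 < x ^ α := Real.rpow_pos_of_pos hx.1 α
      have h1 := hLb x hxI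
      have h2 : sInf (h '' Ioo 0 1) * x ^ (-α) * x ^ α = sInf (h '' Ioo 0 1) := by
        rw [mul_assoc, ← Real.rpow_add hx.1]
        norm_num
      have h3 : sInf (h '' Ioo 0 1) * x ^ (-α) ≤ deriv u x := by
        apply le_of_mul_le_mul_right _ hxα
        rw [h2]
        exact h1
      rw [show deriv (fun y => -u y) x = -deriv u x from deriv.neg]
      linarith
    · intro r hr
      simpa [abs_neg] using hubC r hr
  have hLeq : sInf (h '' Ioo 0 1) = 0 := le_antisymm hLle hL0
  have htend0 : Tendsto h (nhdsWithin 0 (Ioi 0)) (nhds 0) := by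
    rw [hLeq] at htendL; exact htendL
  -- Step 3 : lower bound on u'
  set m := sInf (f '' Ioo 0 1) with hm
  obtain ⟨Cf, hCf⟩ := hfb
  have hfbdd : BddBelow (f '' Ioo 0 1) := by
    refine ⟨-Cf, ?_⟩
    rintro y ⟨x, hx, rfl⟩
    exact (abs_le.1 (hCf x hx)).1
  have hmle : ∀ x ∈ Ioo (0:ℝ) 1, m ≤ f x :=
    fun x hx => csInf_le hfbdd (mem_image_of_mem f hx)
  have hm0 : 0 ≤ m := by
    apply le_csInf (Nonempty.image f ⟨1/2, by norm_num⟩)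
    rintro y ⟨x, hx, rfl⟩
    exact (hfpos x hx).le
  set p := Nm - γ with hp
  have hp0 : 0 < p := by rw [hp]; linarith
  set c₀ := m / (Lam * p) with hc₀
  have hc₀0 : 0 ≤ c₀ := div_nonneg hm0 (mul_nonneg hLam.le hp0.le)
  set g : ℝ → ℝ := fun r => h r - c₀ * r ^ p with hgdef
  have hgd : ∀ x ∈ Ioo (0:ℝ) 1, HasDerivAt g (deriv h x - c₀ * (p * x^(p-1))) x := by
    intro x hx
    have h1 : HasDerivAt h (deriv h x) x := (hDer x hx).differentiableAt.hasDerivAt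
    exact h1.sub ((Real.hasDerivAt_rpow_const (Or.inl (ne_of_gt hx.1))).const_mul c₀)
  have hgmono : MonotoneOn g (Ioo (0:ℝ) 1) := by
    apply monotoneOn_of_deriv_nonneg (convex_Ioo 0 1)
    · exact fun x hx => ((hgd x hx).differentiableAt.continuousAt).continuousWithinAt
    · rw [interior_Ioo]
      exact fun x hx => (hgd x hx).differentiableAt.differentiableWithinAt
    · rw [interior_Ioo]
      intro x hx
      rw [(hgd x hx).deriv]
      have h1 := hderive_ge x hx
      have hep : p - 1 = α - γ := by rw [hp, hα]; ring
      have h2 : c₀ * (p * x^(p-1)) = m * x^(α-γ) / Lam := by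
        rw [hep, hc₀]
        field_simp
      rw [h2]
      have h3 : m * x^(α-γ)/Lam ≤ f x * x^(α-γ)/Lam := by
        have h4 : m * x^(α-γ) ≤ f x * x^(α-γ) :=
          mul_le_mul_of_nonneg_right (hmle x hx) (Real.rpow_nonneg hx.1.le _)
        exact (div_le_div_iff_of_pos_right hLam).mpr h4
      linarith
  have hgtend : Tendsto g (nhdsWithin 0 (Ioi 0)) (nhds 0) := by
    have h1 : Tendsto (fun r : ℝ => c₀ * r ^ p) (nhdsWithin 0 (Ioi 0)) (nhds 0) := by
      have h2 : ContinuousAt (fun r : ℝ => r ^ p) 0 :=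
        Real.continuousAt_rpow_const 0 p (Or.inr hp0.le)
      have h3 : Tendsto (fun r : ℝ => r ^ p) (nhdsWithin 0 (Ioi 0)) (nhds 0) := by
        have := h2.tendsto
        rw [Real.zero_rpow hp0.ne'] at this
        exact this.mono_left nhdsWithin_le_nhds
      simpa using h3.const_mul c₀
    simpa using htend0.sub h1
  have hgpos : ∀ r ∈ Ioo (0:ℝ) 1, 0 ≤ g r := by
    intro r hr
    apply le_of_tendsto hgtend
    filter_upwards [Ioo_mem_nhdsGT_of_mem (⟨le_refl 0, hr.1⟩ : (0:ℝ) ∈ Ico 0 r)] with s hs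
    exact hgmono ⟨hs.1, hs.2.trans hr.2⟩ hr hs.2.le
  have final : ∀ r ∈ Ioo (0:ℝ) 1, c₀ * r ^ (1 - γ) ≤ deriv u r := by
    intro r hr
    have h1 := hgpos r hr
    simp only [hgdef, hhdef] at h1
    have hrα : 0 < r ^ α := Real.rpow_pos_of_pos hr.1 α
    apply le_of_mul_le_mul_right _ hrα
    have h2 : c₀ * r^(1-γ) * r^α = c₀ * r^p := by
      rw [mul_assoc, ← Real.rpow_add hr.1]
      congr 1
      rw [hp, hα]
      ring_nf
    rw [h2]
    linarith
  refine ⟨1/2, by norm_num, ?_, htend0, ?_⟩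
  · intro r hr
    exact hpos r ⟨hr.1, hr.2.trans (by norm_num)⟩
  · intro r hr
    have := final r ⟨hr.1, hr.2.trans (by norm_num)⟩
    calc sInf (f '' Ioo 0 1) / (Lam * (Nm - γ)) * r ^ (1-γ) = c₀ * r ^ (1-γ) := by
          rw [hc₀, hm, hp]
      _ ≤ deriv u r := this

end
end

section
/- Let 0 < γ < 2, let f : (0,1) → ℝ be continuous, bounded and everywhere positive, and let u : (0,1) → ℝ be a bounded C² function satisfying 𝓜⁺[u](r) = f(r)·r^{−γ} for all r ∈ (0,1). Then there exist r₀ ∈ (0,1) and c > 0 such that u'(r) ≤ (sup_{(0,1)} f)/(λ·(N−γ))·r^{1−γ} and |u'(r)| ≤ c·r^{1−γ} for all r ∈ (0,r₀). Consequently u extends to a function on [0,1) which is locally Lipschitz continuous if γ ≤ 1, of class C¹ if γ < 1, and locally Hölder continuous with exponent 2−γ if γ > 1. -/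
open Set Real Filter MeasureTheory
open scoped Topology

noncomputable section

set_option maxHeartbeats 2000000 in
theorem stmt8 (N : ℕ) (hN : 2 ≤ N) (lam Lam : ℝ) (hlam : 0 < lam) (hlL : lam ≤ Lam)
    (hNp : 2 < lam / Lam * ((N : ℝ) - 1) + 1)
    (γ : ℝ) (hγ0 : 0 < γ) (hγ2 : γ < 2)
    (f : ℝ → ℝ) (hfc : ContinuousOn f (Ioo 0 1))
    (hfb : ∃ C : ℝ, ∀ r ∈ Ioo (0:ℝ) 1, |f r| ≤ C)
    (hfpos : ∀ r ∈ Ioo (0:ℝ) 1, 0 < f r)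
    (u : ℝ → ℝ) (hu : ContDiffOn ℝ 2 u (Ioo 0 1))
    (hub : ∃ C : ℝ, ∀ r ∈ Ioo (0:ℝ) 1, |u r| ≤ C)
    (heq : ∀ r ∈ Ioo (0:ℝ) 1, pucciP lam Lam N u r = f r * r ^ (-γ)) :
    (∃ r₀ ∈ Ioo (0:ℝ) 1, ∃ c : ℝ, 0 < c ∧
      (∀ r ∈ Ioo (0:ℝ) r₀,
        deriv u r ≤ sSup (f '' Ioo 0 1) / (lam * ((N : ℝ) - γ)) * r ^ (1 - γ)) ∧
      (∀ r ∈ Ioo (0:ℝ) r₀, |deriv u r| ≤ c * r ^ (1 - γ))) ∧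
    ∃ v : ℝ → ℝ, EqOn v u (Ioo 0 1) ∧ ContinuousOn v (Ico 0 1) ∧
      (γ ≤ 1 → ∀ b ∈ Ioo (0:ℝ) 1, ∃ K : ℝ, ∀ x ∈ Icc (0:ℝ) b, ∀ y ∈ Icc (0:ℝ) b,
        |v x - v y| ≤ K * |x - y|) ∧
      (γ < 1 → ContDiffOn ℝ 1 v (Ico 0 1)) ∧
      (1 < γ → ∀ b ∈ Ioo (0:ℝ) 1, ∃ C : ℝ, ∀ x ∈ Icc (0:ℝ) b, ∀ y ∈ Icc (0:ℝ) b,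
        |v x - v y| ≤ C * |x - y| ^ (2 - γ)) := by
  obtain ⟨Cu, hCu⟩ := hub
  set D : Set ℝ := Ioo (0:ℝ) 1 with hDdef
  have hDopen : IsOpen D := isOpen_Ioo
  set g := deriv u with hgdef
  set h := deriv (deriv u) with hhdef
  have hLam : 0 < Lam := lt_of_lt_of_le hlam hlL
  have hN2 : (2:ℝ) ≤ (N:ℝ) := by exact_mod_cast hN
  have hud : DifferentiableOn ℝ u D := hu.differentiableOn (by norm_num)
  have hu1 : ∀ r ∈ D, HasDerivAt u (g r) r := fun r hr =>
    (hud.differentiableAt (hDopen.mem_nhds hr)).hasDerivAt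
  have hgder : ContDiffOn ℝ 1 g D := hu.deriv_of_isOpen hDopen (by norm_num)
  have hgc : ContinuousOn g D := hgder.continuousOn
  have hgd : DifferentiableOn ℝ g D := hgder.differentiableOn (by norm_num)
  have hg1 : ∀ r ∈ D, HasDerivAt g (h r) r := fun r hr =>
    (hgd.differentiableAt (hDopen.mem_nhds hr)).hasDerivAt
  -- the equation in `max` form
  have hmax : ∀ s : ℝ, Lam * max s 0 - lam * max (-s) 0 = max (lam * s) (Lam * s) := by
    intro s
    rcases le_total 0 s with hs | hs
    · rw [max_eq_left hs, max_eq_right (by linarith), max_eq_right (by nlinarith)]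
      ring
    · rw [max_eq_right hs, max_eq_left (by linarith), max_eq_left (by nlinarith)]
      ring
  have hE : ∀ r ∈ D, max (lam * h r) (Lam * h r)
      + ((N:ℝ) - 1) * max (lam * (g r / r)) (Lam * (g r / r)) = f r * r ^ (-γ) := by
    intro r hr
    have := heq r hr
    rw [pucciP] at this
    rw [hmax, hmax] at this
    exact this
  -- key one-sided inequality
  have hK1 : ∀ r ∈ D, lam * h r + ((N:ℝ) - 1) * (lam * (g r / r)) ≤ f r * r ^ (-γ) := by
    intro r hr
    have h1 : lam * h r ≤ max (lam * h r) (Lam * h r) := le_max_left _ _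
    have h2 : ((N:ℝ) - 1) * (lam * (g r / r)) ≤ ((N:ℝ) - 1) * max (lam * (g r / r)) (Lam * (g r / r)) :=
      mul_le_mul_of_nonneg_left (le_max_left _ _) (by linarith)
    linarith [hE r hr]
  -- constants
  have hhalf : (1/2 : ℝ) ∈ D := by constructor <;> norm_num
  obtain ⟨Cf, hCf⟩ := hfb
  have hbddf : BddAbove (f '' D) := by
    refine ⟨Cf, ?_⟩
    rintro y ⟨r, hr, rfl⟩
    exact le_trans (le_abs_self _) (hCf r hr)
  set C₀ := sSup (f '' D) with hC0def
  have hfle : ∀ r ∈ D, f r ≤ C₀ := fun r hr => le_csSup hbddf ⟨r, hr, rfl⟩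
  have hC0 : 0 < C₀ := lt_of_lt_of_le (hfpos _ hhalf) (hfle _ hhalf)
  have hNγ : 0 < (N:ℝ) - γ := by linarith
  set K := C₀ / (lam * ((N:ℝ) - γ)) with hKdef
  have hK : 0 < K := div_pos hC0 (by positivity)
  -- Lemma A : g ≥ 0 on D
  set kk := lam * ((N:ℝ) - 1) / Lam with hkkdef
  have hkk1 : 1 < kk := by
    have : lam / Lam * ((N:ℝ) - 1) = kk := by rw [hkkdef]; ring
    linarith [hNp, this]
  -- ψ and its derivative where g < 0
  have hψder : ∀ x ∈ D, g x < 0 →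
      HasDerivAt (fun t : ℝ => t ^ kk * g t) (kk * x ^ (kk - 1) * g x + x ^ kk * h x) x ∧
      0 < kk * x ^ (kk - 1) * g x + x ^ kk * h x := by
    intro x hx hgx
    have hx0 : (0:ℝ) < x := hx.1
    constructor
    · exact ((Real.hasDerivAt_rpow_const (Or.inl hx0.ne')).mul (hg1 x hx)).congr_deriv (by ring)
    · -- compute the relation Lam * h x = f x * x^(-γ) - (N-1) * lam * (g x / x)
      have htneg : g x / x < 0 := div_neg_of_neg_of_pos hgx hx0
      have hm2 : max (lam * (g x / x)) (Lam * (g x / x)) = lam * (g x / x) :=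
        max_eq_left (by nlinarith)
      have heq2 : max (lam * h x) (Lam * h x)
          = f x * x ^ (-γ) - ((N:ℝ) - 1) * (lam * (g x / x)) := by
        have := hE x hx
        rw [hm2] at this
        linarith
      have hrpos : 0 < f x * x ^ (-γ) := mul_pos (hfpos x hx) (rpow_pos_of_pos hx0 _)
      have ht0 : lam * (g x / x) ≤ 0 := by nlinarith
      have ht1 : ((N:ℝ) - 1) * (lam * (g x / x)) ≤ 0 :=
        mul_nonpos_of_nonneg_of_nonpos (by linarith) ht0
      have hRHS : 0 < f x * x ^ (-γ) - ((N:ℝ) - 1) * (lam * (g x / x)) := by linarith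
      have hhx : 0 < h x := by
        by_contra hle
        push_neg at hle
        have : max (lam * h x) (Lam * h x) ≤ 0 :=
          max_le (mul_nonpos_of_nonneg_of_nonpos hlam.le hle)
            (mul_nonpos_of_nonneg_of_nonpos hLam.le hle)
        rw [heq2] at this
        linarith
      have hLh : Lam * h x = f x * x ^ (-γ) - ((N:ℝ) - 1) * (lam * (g x / x)) := by
        rw [← heq2]
        exact (max_eq_right (by nlinarith)).symm
      -- now compute positivity
      have hxkk : x ^ kk = x ^ (kk - 1) * x := by
        rw [show kk = (kk - 1) + 1 by ring, Real.rpow_add_one hx0.ne']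
        ring_nf
      have hgxx : g x / x * x = g x := div_mul_cancel₀ _ hx0.ne'
      have hEexpr : Lam * (x * h x + kk * g x) = f x * x ^ (-γ) * x := by
        have := hLh
        have hkkL : Lam * kk = lam * ((N:ℝ) - 1) := by
          rw [hkkdef]; field_simp
        have h3 : Lam * h x * x = f x * x ^ (-γ) * x - ((N:ℝ) - 1) * (lam * (g x / x)) * x := by
          rw [hLh]; ring
        have h4 : ((N:ℝ) - 1) * (lam * (g x / x)) * x = ((N:ℝ) - 1) * lam * g x := by
          calc ((N:ℝ) - 1) * (lam * (g x / x)) * x = ((N:ℝ) - 1) * lam * (g x / x * x) := by ring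
            _ = ((N:ℝ) - 1) * lam * g x := by rw [hgxx]
        have hkkL' : Lam * (kk * g x) = lam * ((N:ℝ) - 1) * g x := by
          rw [← mul_assoc, hkkL]
        calc Lam * (x * h x + kk * g x) = Lam * h x * x + Lam * (kk * g x) := by ring
          _ = (f x * x ^ (-γ) * x - ((N:ℝ) - 1) * (lam * (g x / x)) * x)
              + lam * ((N:ℝ) - 1) * g x := by rw [h3, hkkL']
          _ = f x * x ^ (-γ) * x := by rw [h4]; ring
      have hEpos : 0 < x * h x + kk * g x := by
        by_contra hle
        push_neg at hle
        have h5 : Lam * (x * h x + kk * g x) ≤ 0 := mul_nonpos_of_nonneg_of_nonpos hLam.le hle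
        have h6 : 0 < f x * x ^ (-γ) * x := by positivity
        rw [hEexpr] at h5
        linarith
      have hfin : kk * x ^ (kk - 1) * g x + x ^ kk * h x = x ^ (kk - 1) * (x * h x + kk * g x) := by
        rw [hxkk]; ring
      rw [hfin]
      exact mul_pos (rpow_pos_of_pos hx0 _) hEpos
  -- g ≥ 0 on D
  have hgnn : ∀ r ∈ D, 0 ≤ g r := by
    by_contra hcon
    push_neg at hcon
    obtain ⟨r₁, hr₁D, hgr₁⟩ := hcon
    set T := {t : ℝ | t ∈ Ioo (0:ℝ) r₁ ∧ 0 ≤ g t} with hTdef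
    have hψcont : ∀ s₀ ∈ Ioc (0:ℝ) r₁, ContinuousOn (fun t : ℝ => t ^ kk * g t) (Icc s₀ r₁) := by
      intro s₀ hs₀
      have hsub : Icc s₀ r₁ ⊆ D := fun x hx =>
        ⟨lt_of_lt_of_le hs₀.1 hx.1, lt_of_le_of_lt hx.2 hr₁D.2⟩
      exact ContinuousOn.mul
        (fun x hx => (Real.continuousAt_rpow_const x kk
          (Or.inl (ne_of_gt (lt_of_lt_of_le hs₀.1 hx.1)))).continuousWithinAt)
        (hgc.mono hsub)
    rcases eq_empty_or_nonempty T with hTe | hTne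
    · -- g < 0 on all of (0, r₁]
      have hneg : ∀ t ∈ Ioc (0:ℝ) r₁, g t < 0 := by
        intro t ht
        rcases eq_or_lt_of_le ht.2 with heqt | htlt
        · rw [heqt]; exact hgr₁
        · by_contra hge
          push_neg at hge
          have : t ∈ T := ⟨⟨ht.1, htlt⟩, hge⟩
          rw [hTe] at this
          exact this
      set A := r₁ ^ kk * g r₁ with hAdef
      have hA : A < 0 := mul_neg_of_pos_of_neg (rpow_pos_of_pos hr₁D.1 _) hgr₁
      have hψle : ∀ s ∈ Ioc (0:ℝ) r₁, s ^ kk * g s ≤ A := by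
        intro s hs
        have hmono : MonotoneOn (fun t : ℝ => t ^ kk * g t) (Icc s r₁) := by
          refine monotoneOn_of_deriv_nonneg (convex_Icc s r₁) (hψcont s hs) ?_ ?_
          · rw [interior_Icc]
            intro x hx
            have hxD : x ∈ D := ⟨lt_trans hs.1 hx.1, lt_trans hx.2 hr₁D.2⟩
            exact ((hψder x hxD (hneg x ⟨lt_trans hs.1 hx.1, hx.2.le⟩)).1.differentiableAt).differentiableWithinAt
          · rw [interior_Icc]
            intro x hx
            have hxD : x ∈ D := ⟨lt_trans hs.1 hx.1, lt_trans hx.2 hr₁D.2⟩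
            obtain ⟨hd, hp⟩ := hψder x hxD (hneg x ⟨lt_trans hs.1 hx.1, hx.2.le⟩)
            rw [hd.deriv]
            exact hp.le
        exact hmono (left_mem_Icc.2 hs.2) (right_mem_Icc.2 hs.2) hs.2
      have hgle : ∀ s ∈ Ioc (0:ℝ) r₁, g s ≤ A / s ^ kk := by
        intro s hs
        rw [le_div_iff₀ (rpow_pos_of_pos hs.1 kk), mul_comm]
        exact hψle s hs
      -- the auxiliary function χ is nonincreasing
      have hχle : ∀ s ∈ Ioc (0:ℝ) r₁,
          u r₁ + (A/(kk-1)) * r₁ ^ (1-kk) ≤ u s + (A/(kk-1)) * s ^ (1-kk) := by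
        intro s hs
        have hsub : Icc s r₁ ⊆ D := fun x hx =>
          ⟨lt_of_lt_of_le hs.1 hx.1, lt_of_le_of_lt hx.2 hr₁D.2⟩
        have hanti : AntitoneOn (fun t : ℝ => u t + (A/(kk-1)) * t ^ (1-kk)) (Icc s r₁) := by
          refine antitoneOn_of_deriv_nonpos (convex_Icc s r₁) ?_ ?_ ?_
          · exact (hu.continuousOn.mono hsub).add (ContinuousOn.mul continuousOn_const
              (fun x hx => (Real.continuousAt_rpow_const x (1-kk)
                (Or.inl (ne_of_gt (lt_of_lt_of_le hs.1 hx.1)))).continuousWithinAt))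
          · rw [interior_Icc]
            intro x hx
            have hxD : x ∈ D := hsub (Ioo_subset_Icc_self hx)
            have hx0 : (0:ℝ) < x := hxD.1
            exact (((hu1 x hxD).add ((Real.hasDerivAt_rpow_const (p := 1-kk)
              (Or.inl hx0.ne')).const_mul (A/(kk-1)))).differentiableAt).differentiableWithinAt
          · rw [interior_Icc]
            intro x hx
            have hxD : x ∈ D := hsub (Ioo_subset_Icc_self hx)
            have hx0 : (0:ℝ) < x := hxD.1
            have hder := (hu1 x hxD).add ((Real.hasDerivAt_rpow_const (p := 1-kk)
              (Or.inl hx0.ne')).const_mul (A/(kk-1)))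
            rw [HasDerivAt.deriv (f := fun t : ℝ => u t + A/(kk-1) * t ^ (1-kk)) hder]
            have hgs : g x ≤ A / x ^ kk := hgle x ⟨hx0, hx.2.le⟩
            have hxkk : x ^ (1-kk-1) = (x ^ kk)⁻¹ := by
              rw [show (1:ℝ)-kk-1 = -kk by ring, Real.rpow_neg hx0.le]
            have hkne : kk - 1 ≠ 0 := ne_of_gt (by linarith)
            have hAk : A/(kk-1) * ((1-kk) * x ^ (1-kk-1)) = -(A * (x ^ kk)⁻¹) := by
              rw [hxkk]
              calc A/(kk-1) * ((1-kk) * (x ^ kk)⁻¹)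
                  = -(A/(kk-1)*(kk-1) * (x ^ kk)⁻¹) := by ring
                _ = -(A * (x ^ kk)⁻¹) := by rw [div_mul_cancel₀ A hkne]
            rw [hAk]
            have : A / x ^ kk = A * (x ^ kk)⁻¹ := div_eq_mul_inv A _
            linarith [hgs, this ▸ hgs]
        exact hanti (left_mem_Icc.2 hs.2) (right_mem_Icc.2 hs.2) hs.2
      set B := -(A/(kk-1)) with hBdef
      have hB : 0 < B := by
        have h9 : A/(kk-1) < 0 := div_neg_of_neg_of_pos hA (by linarith)
        rw [hBdef]
        linarith
      set β := u r₁ + (A/(kk-1)) * r₁ ^ (1-kk) with hβdef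
      have hlow : ∀ s ∈ Ioc (0:ℝ) r₁, β + B * s ^ (1-kk) ≤ u s := by
        intro s hs
        have := hχle s hs
        rw [hβdef, hBdef]
        linarith
      have htop : Tendsto (fun s : ℝ => s ^ (1 - kk)) (𝓝[>] (0:ℝ)) atTop := by
        have h1 : Tendsto (fun s : ℝ => (s⁻¹) ^ (kk - 1)) (𝓝[>] (0:ℝ)) atTop :=
          (tendsto_rpow_atTop (by linarith)).comp tendsto_inv_nhdsGT_zero
        refine h1.congr' ?_
        filter_upwards [self_mem_nhdsWithin] with s hs
        simp only [mem_Ioi] at hs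
        rw [Real.inv_rpow hs.le, ← Real.rpow_neg hs.le, show -(kk-1) = 1-kk by ring]
      have htop2 : Tendsto (fun s : ℝ => β + B * s ^ (1 - kk)) (𝓝[>] (0:ℝ)) atTop :=
        tendsto_atTop_add_const_left _ β (htop.const_mul_atTop hB)
      have hev1 : ∀ᶠ s in 𝓝[>] (0:ℝ), Cu < β + B * s ^ (1 - kk) :=
        htop2.eventually_gt_atTop Cu
      have hev2 : ∀ᶠ s in 𝓝[>] (0:ℝ), s ∈ Ioc (0:ℝ) r₁ :=
        Ioc_mem_nhdsGT_of_mem ⟨le_refl 0, hr₁D.1⟩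
      obtain ⟨s, hs1, hs2⟩ := (hev1.and hev2).exists
      have hsD : s ∈ D := ⟨hs2.1, lt_of_le_of_lt hs2.2 hr₁D.2⟩
      have h7 := hlow s hs2
      have h8 := (abs_le.1 (hCu s hsD)).2
      linarith
    · -- T nonempty: use its supremum
      have hTbdd : BddAbove T := ⟨r₁, fun t ht => (ht.1.2).le⟩
      set a := sSup T with hadef
      obtain ⟨t₀, ht₀⟩ := hTne
      have ht₀a : t₀ ≤ a := le_csSup hTbdd ht₀
      have ha0 : 0 < a := lt_of_lt_of_le ht₀.1.1 ht₀a
      have har₁ : a ≤ r₁ := csSup_le ⟨t₀, ht₀⟩ (fun t ht => ht.1.2.le)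
      have haD : a ∈ D := ⟨ha0, lt_of_le_of_lt har₁ hr₁D.2⟩
      have hgcAt : ContinuousAt g a := hgc.continuousAt (hDopen.mem_nhds haD)
      have haclos : a ∈ closure T := csSup_mem_closure ⟨t₀, ht₀⟩ hTbdd
      haveI : (𝓝[T] a).NeBot := mem_closure_iff_nhdsWithin_neBot.1 haclos
      have hga : 0 ≤ g a := by
        refine ge_of_tendsto (hgcAt.tendsto.mono_left (nhdsWithin_le_nhds (s := T))) ?_
        exact eventually_nhdsWithin_of_forall (fun t ht => ht.2)
      have har₁' : a < r₁ := by
        rcases eq_or_lt_of_le har₁ with heqa | h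
        · rw [heqa] at hga; linarith
        · exact h
      have hneg2 : ∀ t ∈ Ioc a r₁, g t < 0 := by
        intro t ht
        rcases eq_or_lt_of_le ht.2 with heqt | htlt
        · rw [heqt]; exact hgr₁
        · by_contra hge
          push_neg at hge
          have : t ∈ T := ⟨⟨lt_trans ha0 ht.1, htlt⟩, hge⟩
          exact absurd (le_csSup hTbdd this) (not_le.2 ht.1)
      have hmono : StrictMonoOn (fun t : ℝ => t ^ kk * g t) (Icc a r₁) := by
        refine strictMonoOn_of_deriv_pos (convex_Icc a r₁) (hψcont a ⟨ha0, har₁⟩) ?_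
        intro x hx
        rw [interior_Icc] at hx
        have hxD : x ∈ D := ⟨lt_trans ha0 hx.1, lt_trans hx.2 hr₁D.2⟩
        obtain ⟨hd, hp⟩ := hψder x hxD (hneg2 x ⟨hx.1, hx.2.le⟩)
        rw [hd.deriv]
        exact hp
      have h1 : a ^ kk * g a < r₁ ^ kk * g r₁ :=
        hmono (left_mem_Icc.2 har₁) (right_mem_Icc.2 har₁) har₁'
      have h2 : 0 ≤ a ^ kk * g a := mul_nonneg (rpow_pos_of_pos ha0 _).le hga
      have h3 : r₁ ^ kk * g r₁ < 0 := mul_neg_of_pos_of_neg (rpow_pos_of_pos hr₁D.1 _) hgr₁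
      linarith
  -- for every r and ε there are arbitrarily small s with s^(N-1) g s < ε
  have hsmall : ∀ r ∈ D, ∀ ε : ℝ, 0 < ε → ∃ s ∈ Ioo (0:ℝ) r, s ^ ((N:ℝ) - 1) * g s < ε := by
    intro r hr ε hε
    by_contra hcon
    push_neg at hcon
    set y := r / 2 with hy
    have hy0 : 0 < y := by rw [hy]; linarith [hr.1]
    have hyr : y ∈ Ioo (0:ℝ) r := ⟨hy0, by rw [hy]; linarith [hr.1]⟩
    have hyD : y ∈ D := ⟨hyr.1, lt_trans hyr.2 hr.2⟩
    have hglb : ∀ x ∈ Ioo (0:ℝ) r, ε * x⁻¹ ≤ g x := by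
      intro x hx
      have hx0 : 0 < x := hx.1
      have hx1 : x < 1 := lt_trans hx.2 hr.2
      have hle : x ^ ((N:ℝ)-1) ≤ x := by
        calc x ^ ((N:ℝ)-1) ≤ x ^ (1:ℝ) :=
              Real.rpow_le_rpow_of_exponent_ge hx0 hx1.le (by linarith)
          _ = x := Real.rpow_one x
      have h1 : ε ≤ x ^ ((N:ℝ)-1) * g x := hcon x hx
      have hgx0 : 0 < g x := by
        by_contra hgle
        push_neg at hgle
        nlinarith [Real.rpow_pos_of_pos hx0 ((N:ℝ)-1),
          mul_nonpos_of_nonneg_of_nonpos (Real.rpow_pos_of_pos hx0 ((N:ℝ)-1)).le hgle]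
      have hxx : x ^ ((N:ℝ)-1) * x⁻¹ ≤ 1 := by
        have h10 := mul_le_mul_of_nonneg_right hle (inv_nonneg.2 hx0.le)
        rwa [mul_inv_cancel₀ hx0.ne'] at h10
      calc ε * x⁻¹ ≤ (x ^ ((N:ℝ)-1) * g x) * x⁻¹ :=
            mul_le_mul_of_nonneg_right h1 (inv_nonneg.2 hx0.le)
        _ = g x * (x ^ ((N:ℝ)-1) * x⁻¹) := by ring
        _ ≤ g x * 1 := mul_le_mul_of_nonneg_left hxx hgx0.le
        _ = g x := mul_one _
    have hψ2le : ∀ s ∈ Ioo (0:ℝ) y, u s - ε * Real.log s ≤ u y - ε * Real.log y := by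
      intro s hs
      have hsub : Icc s y ⊆ D := fun x hx =>
        ⟨lt_of_lt_of_le hs.1 hx.1, lt_of_le_of_lt hx.2 hyD.2⟩
      have hmono : MonotoneOn (fun t : ℝ => u t - ε * Real.log t) (Icc s y) := by
        refine monotoneOn_of_deriv_nonneg (convex_Icc s y) ?_ ?_ ?_
        · exact (hu.continuousOn.mono hsub).sub (ContinuousOn.mul continuousOn_const
            (fun x hx => (Real.continuousAt_log
              (ne_of_gt (lt_of_lt_of_le hs.1 hx.1))).continuousWithinAt))
        · rw [interior_Icc]
          intro x hx
          have hxD : x ∈ D := hsub (Ioo_subset_Icc_self hx)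
          exact (((hu1 x hxD).sub ((Real.hasDerivAt_log
            hxD.1.ne').const_mul ε)).differentiableAt).differentiableWithinAt
        · rw [interior_Icc]
          intro x hx
          have hxD : x ∈ D := hsub (Ioo_subset_Icc_self hx)
          have hder := (hu1 x hxD).sub ((Real.hasDerivAt_log hxD.1.ne').const_mul ε)
          rw [HasDerivAt.deriv (f := fun t : ℝ => u t - ε * Real.log t) hder]
          have : ε * x⁻¹ ≤ g x := hglb x ⟨hxD.1, lt_trans hx.2 hyr.2⟩
          linarith
      exact hmono (left_mem_Icc.2 hs.2.le) (right_mem_Icc.2 hs.2.le) hs.2.le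
    have hbot : Tendsto (fun s : ℝ => (u y - ε * Real.log y) + ε * Real.log s)
        (𝓝[>] (0:ℝ)) atBot := by
      refine tendsto_atBot_add_const_left _ _ ?_
      exact Tendsto.const_mul_atBot hε Real.tendsto_log_nhdsGT_zero
    have hev1 : ∀ᶠ s in 𝓝[>] (0:ℝ), (u y - ε * Real.log y) + ε * Real.log s < -Cu :=
      hbot.eventually_lt_atBot (-Cu)
    have hev2 : ∀ᶠ s in 𝓝[>] (0:ℝ), s ∈ Ioo (0:ℝ) y :=
      Ioo_mem_nhdsGT_of_mem ⟨le_refl 0, hy0⟩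
    obtain ⟨s, hs1, hs2⟩ := (hev1.and hev2).exists
    have hsD : s ∈ D := ⟨hs2.1, lt_trans hs2.2 hyD.2⟩
    have h7 := hψ2le s hs2
    have h8 := (abs_le.1 (hCu s hsD)).1
    linarith
  -- the main upper bound
  have hmain : ∀ r ∈ D, g r ≤ K * r ^ (1 - γ) := by
    have hφder : ∀ x ∈ D, HasDerivAt (fun t : ℝ => t ^ ((N:ℝ)-1) * g t - K * t ^ ((N:ℝ)-γ))
        ((((N:ℝ)-1) * x ^ ((N:ℝ)-1-1) * g x + x ^ ((N:ℝ)-1) * h x)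
          - K * (((N:ℝ)-γ) * x ^ ((N:ℝ)-γ-1))) x := by
      intro x hx
      exact ((Real.hasDerivAt_rpow_const (Or.inl hx.1.ne')).mul (hg1 x hx)).sub
        ((Real.hasDerivAt_rpow_const (Or.inl hx.1.ne')).const_mul K)
    have hφmono : AntitoneOn (fun t : ℝ => t ^ ((N:ℝ)-1) * g t - K * t ^ ((N:ℝ)-γ)) D := by
      refine antitoneOn_of_deriv_nonpos (convex_Ioo 0 1) ?_ ?_ ?_
      · exact ContinuousOn.sub (ContinuousOn.mul (fun x hx =>
          (Real.continuousAt_rpow_const x _ (Or.inl (ne_of_gt hx.1))).continuousWithinAt) hgc)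
          (ContinuousOn.mul continuousOn_const (fun x hx =>
          (Real.continuousAt_rpow_const x _ (Or.inl (ne_of_gt hx.1))).continuousWithinAt))
      · rw [show interior (Ioo (0:ℝ) 1) = D from interior_Ioo]
        exact fun x hx => ((hφder x hx).differentiableAt).differentiableWithinAt
      · rw [show interior (Ioo (0:ℝ) 1) = D from interior_Ioo]
        intro x hx
        rw [(hφder x hx).deriv]
        have hx0 : 0 < x := hx.1
        have hb1 : lam * h x + ((N:ℝ)-1) * (lam * (g x / x)) ≤ C₀ * x ^ (-γ) :=
          le_trans (hK1 x hx)
            (mul_le_mul_of_nonneg_right (hfle x hx) (rpow_pos_of_pos hx0 _).le)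
        have hbig : h x + ((N:ℝ)-1) * (g x / x) ≤ C₀ / lam * x ^ (-γ) := by
          rw [div_mul_eq_mul_div, le_div_iff₀ hlam]
          nlinarith [hb1]
        have hm : x ^ ((N:ℝ)-1) * (h x + ((N:ℝ)-1) * (g x / x))
            ≤ x ^ ((N:ℝ)-1) * (C₀ / lam * x ^ (-γ)) :=
          mul_le_mul_of_nonneg_left hbig (rpow_pos_of_pos hx0 _).le
        have e2 : x ^ ((N:ℝ)-γ-1) = x ^ ((N:ℝ)-1) * x ^ (-γ) := by
          rw [← Real.rpow_add hx0]
          congr 1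
          ring
        have e1 : x ^ ((N:ℝ)-1-1) = x ^ ((N:ℝ)-1) / x := Real.rpow_sub_one hx0.ne' _
        have e4 : K * ((N:ℝ)-γ) = C₀ / lam := by
          rw [hKdef]
          field_simp
        have e3 : ((N:ℝ)-1) * (x ^ ((N:ℝ)-1) / x) * g x
            = ((N:ℝ)-1) * (x ^ ((N:ℝ)-1) * (g x / x)) := by ring
        have e5 : K * (((N:ℝ)-γ) * (x ^ ((N:ℝ)-1) * x ^ (-γ)))
            = C₀ / lam * (x ^ ((N:ℝ)-1) * x ^ (-γ)) := by rw [← mul_assoc, e4]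
        rw [e1, e2, e5, e3]
        nlinarith [hm]
    intro r hr
    have hstep : ∀ ε : ℝ, 0 < ε → r ^ ((N:ℝ)-1) * g r ≤ K * r ^ ((N:ℝ)-γ) + ε := by
      intro ε hε
      obtain ⟨s, hs, hsε⟩ := hsmall r hr ε hε
      have hsD : s ∈ D := ⟨hs.1, lt_trans hs.2 hr.2⟩
      have hmono := hφmono hsD hr hs.2.le
      simp only at hmono
      have hpos : 0 < s ^ ((N:ℝ)-γ) := rpow_pos_of_pos hs.1 _
      nlinarith [mul_pos hK hpos]
    have h2 : r ^ ((N:ℝ)-1) * g r ≤ K * r ^ ((N:ℝ)-γ) := le_of_forall_pos_le_add hstep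
    have hrp : 0 < r ^ ((N:ℝ)-1) := rpow_pos_of_pos hr.1 _
    rw [show (1:ℝ) - γ = ((N:ℝ)-γ) - ((N:ℝ)-1) by ring, Real.rpow_sub hr.1,
      ← mul_div_assoc, le_div_iff₀ hrp]
    nlinarith [h2]
  -- absolute value bound
  have habs : ∀ r ∈ D, |g r| ≤ K * r ^ (1 - γ) := by
    intro r hr
    rw [abs_of_nonneg (hgnn r hr)]
    exact hmain r hr
  constructor
  · -- Part 1
    refine ⟨1/2, hhalf, K, hK, ?_, ?_⟩
    · intro r hr
      exact hmain r ⟨hr.1, lt_trans hr.2 (by norm_num)⟩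
    · intro r hr
      exact habs r ⟨hr.1, lt_trans hr.2 (by norm_num)⟩
  · -- Part 2 : the extension v
    have humono : MonotoneOn u D :=
      monotoneOn_of_deriv_nonneg (convex_Ioo 0 1) hu.continuousOn
        (by rw [show interior (Ioo (0:ℝ) 1) = D from interior_Ioo]; exact hud)
        (by rw [show interior (Ioo (0:ℝ) 1) = D from interior_Ioo]
            exact fun x hx => hgnn x hx)
    have hbb : BddBelow (u '' D) := by
      refine ⟨-Cu, ?_⟩
      rintro z ⟨r, hr, rfl⟩
      linarith [(abs_le.1 (hCu r hr)).1]
    set L := sInf (u '' D) with hLdef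
    have htendu : Tendsto u (𝓝[>] (0:ℝ)) (𝓝 L) :=
      MonotoneOn.tendsto_nhdsWithin_Ioo_right ⟨1/2, hhalf⟩ humono hbb
    set v : ℝ → ℝ := fun x => if 0 < x then u x else L with hvdef
    have hvyeq : ∀ x : ℝ, 0 < x → v x = u x := fun x hx => if_pos hx
    have hveq : EqOn v u D := fun x hx => hvyeq x hx.1
    have hv0 : v 0 = L := if_neg (lt_irrefl 0)
    have hvnbhd : ∀ x ∈ D, v =ᶠ[𝓝 x] u := by
      intro x hx
      filter_upwards [IsOpen.mem_nhds isOpen_Ioi (show x ∈ Ioi (0:ℝ) from hx.1)] with z hz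
      exact hvyeq z hz
    have htendv : Tendsto v (𝓝[>] (0:ℝ)) (𝓝 L) := by
      refine htendu.congr' ?_
      filter_upwards [self_mem_nhdsWithin] with z hz
      exact (hvyeq z (mem_Ioi.1 hz)).symm
    have hvd : ∀ x ∈ D, HasDerivAt v (g x) x := fun x hx =>
      (hu1 x hx).congr_of_eventuallyEq (hvnbhd x hx)
    have hvderiv : ∀ x ∈ D, deriv v x = g x := fun x hx => (hvd x hx).deriv
    have hvD : ∀ x ∈ D, ContinuousAt v x := fun x hx =>
      (hu.continuousOn.continuousAt (hDopen.mem_nhds hx)).congr (hvnbhd x hx).symm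
    have hIco : Ico (0:ℝ) 1 = {0} ∪ Ioo 0 1 := by
      ext z
      simp only [mem_Ico, mem_union, mem_singleton_iff, mem_Ioo]
      constructor
      · rintro ⟨h1, h2⟩
        rcases eq_or_lt_of_le h1 with h3 | h3
        · exact Or.inl h3.symm
        · exact Or.inr ⟨h3, h2⟩
      · rintro (rfl | ⟨h1, h2⟩)
        · exact ⟨le_refl 0, by norm_num⟩
        · exact ⟨h1.le, h2⟩
    have hvc : ContinuousOn v (Ico 0 1) := by
      intro x hx
      rcases eq_or_lt_of_le hx.1 with h0 | h0
      · have hx0 : x = 0 := h0.symm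
        subst hx0
        rw [ContinuousWithinAt, hv0, hIco, nhdsWithin_union]
        refine Tendsto.sup ?_ ?_
        · rw [nhdsWithin_singleton]
          exact hv0 ▸ tendsto_pure_nhds v 0
        · exact htendv.mono_left (nhdsWithin_mono 0 Ioo_subset_Ioi_self)
      · exact (hvD x ⟨h0, hx.2⟩).continuousWithinAt
    have hvmono : MonotoneOn v (Ico 0 1) := by
      refine monotoneOn_of_deriv_nonneg (convex_Ico 0 1) hvc ?_ ?_
      · rw [interior_Ico]
        exact fun x hx => ((hvd x hx).differentiableAt).differentiableWithinAt
      · rw [interior_Ico]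
        intro x hx
        rw [hvderiv x hx]
        exact hgnn x hx
    set M₂ := K / (2 - γ) with hM2def
    have hM₂ : 0 < M₂ := div_pos hK (by linarith)
    -- the key Hölder-type estimate
    have hkey : ∀ x ∈ Ico (0:ℝ) 1, ∀ y ∈ Ico (0:ℝ) 1, x < y → (x = 0 ∨ 1 ≤ γ) →
        v y - v x ≤ M₂ * (y - x) ^ (2 - γ) := by
      intro x hx y hy hxy hcase
      have hsub : Icc x y ⊆ Ico 0 1 := fun z hz =>
        ⟨le_trans hx.1 hz.1, lt_of_le_of_lt hz.2 hy.2⟩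
      have hwc : ContinuousOn (fun t : ℝ => M₂ * (t - x) ^ (2 - γ) - (v t - v x)) (Icc x y) := by
        refine ContinuousOn.sub ?_ ((hvc.mono hsub).sub continuousOn_const)
        exact (continuous_const.mul ((Real.continuous_rpow_const (by linarith)).comp
          (continuous_id.sub continuous_const))).continuousOn
      have hwd : ∀ z ∈ Ioo x y,
          HasDerivAt (fun t : ℝ => M₂ * (t - x) ^ (2 - γ) - (v t - v x))
            (M₂ * ((2 - γ) * (z - x) ^ (2 - γ - 1) * 1) - g z) z := by
        intro z hz
        have hzD : z ∈ D := ⟨lt_of_le_of_lt hx.1 hz.1, lt_trans hz.2 hy.2⟩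
        have hzx : z - x ≠ 0 := sub_ne_zero.2 (ne_of_gt hz.1)
        have h2 : HasDerivAt (fun t : ℝ => t - x) 1 z := (hasDerivAt_id z).sub_const x
        have h1 : HasDerivAt (fun t : ℝ => (t - x) ^ (2 - γ))
            ((2 - γ) * (z - x) ^ (2 - γ - 1) * 1) z :=
          (h2.rpow_const (p := 2 - γ) (Or.inl hzx)).congr_deriv (by ring)
        exact (h1.const_mul M₂).sub ((hvd z hzD).sub_const (v x))
      have hwnn : ∀ z ∈ Ioo x y, 0 ≤ M₂ * ((2 - γ) * (z - x) ^ (2 - γ - 1) * 1) - g z := by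
        intro z hz
        have hzD : z ∈ D := ⟨lt_of_le_of_lt hx.1 hz.1, lt_trans hz.2 hy.2⟩
        have hzx0 : 0 < z - x := sub_pos.2 hz.1
        have e6 : M₂ * ((2 - γ) * (z - x) ^ (2 - γ - 1) * 1) = K * (z - x) ^ (1 - γ) := by
          rw [show (2:ℝ) - γ - 1 = 1 - γ by ring, hM2def]
          have h2γ0 : (2:ℝ) - γ ≠ 0 := ne_of_gt (by linarith)
          calc K / (2 - γ) * ((2 - γ) * (z - x) ^ ((1:ℝ) - γ) * 1)
              = K / (2 - γ) * (2 - γ) * (z - x) ^ ((1:ℝ) - γ) := by ring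
            _ = K * (z - x) ^ ((1:ℝ) - γ) := by rw [div_mul_cancel₀ K h2γ0]
        have hbase : K * z ^ (1 - γ) ≤ K * (z - x) ^ (1 - γ) := by
          rcases hcase with hx0 | hγ1
          · rw [hx0, sub_zero]
          · exact mul_le_mul_of_nonneg_left
              (Real.rpow_le_rpow_of_nonpos hzx0 (by linarith [hx.1]) (by linarith)) hK.le
        have := hmain z hzD
        rw [e6]
        linarith
      have hwmono : MonotoneOn (fun t : ℝ => M₂ * (t - x) ^ (2 - γ) - (v t - v x)) (Icc x y) := by
        refine monotoneOn_of_deriv_nonneg (convex_Icc x y) hwc ?_ ?_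
        · rw [interior_Icc]
          exact fun z hz => ((hwd z hz).differentiableAt).differentiableWithinAt
        · rw [interior_Icc]
          intro z hz
          rw [(hwd z hz).deriv]
          exact hwnn z hz
      have h0 := hwmono (left_mem_Icc.2 hxy.le) (right_mem_Icc.2 hxy.le) hxy.le
      simp only at h0
      have hwx : M₂ * (x - x) ^ (2 - γ) - (v x - v x) = 0 := by
        rw [sub_self, Real.zero_rpow (by linarith : (2:ℝ) - γ ≠ 0)]
        ring
      rw [hwx] at h0
      linarith
    refine ⟨v, hveq, hvc, ?_, ?_, ?_⟩
    · -- γ ≤ 1 : Lipschitz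
      intro hγ1 b hb
      refine ⟨K, ?_⟩
      have hKb : ∀ t ∈ D, g t ≤ K := by
        intro t ht
        calc g t ≤ K * t ^ (1 - γ) := hmain t ht
          _ ≤ K * 1 := mul_le_mul_of_nonneg_left
              (Real.rpow_le_one ht.1.le ht.2.le (by linarith)) hK.le
          _ = K := mul_one K
      have hwmono : MonotoneOn (fun t : ℝ => K * t - v t) (Ico 0 1) := by
        refine monotoneOn_of_deriv_nonneg (convex_Ico 0 1)
          (((continuous_const.mul continuous_id).continuousOn).sub hvc) ?_ ?_
        · rw [interior_Ico]
          intro z hz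
          have hd2 : HasDerivAt (fun t : ℝ => K * t - v t) (K * 1 - g z) z :=
            ((hasDerivAt_id z).const_mul K).sub (hvd z hz)
          exact hd2.differentiableAt.differentiableWithinAt
        · rw [interior_Ico]
          intro z hz
          have hd2 : HasDerivAt (fun t : ℝ => K * t - v t) (K * 1 - g z) z :=
            ((hasDerivAt_id z).const_mul K).sub (hvd z hz)
          rw [hd2.deriv]
          have := hKb z hz
          linarith
      intro p hp q hq
      have hsub2 : Icc (0:ℝ) b ⊆ Ico 0 1 := fun z hz => ⟨hz.1, lt_of_le_of_lt hz.2 hb.2⟩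
      have main : ∀ p q : ℝ, p ∈ Icc (0:ℝ) b → q ∈ Icc (0:ℝ) b → p ≤ q →
          |v p - v q| ≤ K * |p - q| := by
        intro p q hp hq hpq
        have h1 := hwmono (hsub2 hp) (hsub2 hq) hpq
        simp only at h1
        have h2 := hvmono (hsub2 hp) (hsub2 hq) hpq
        rw [abs_of_nonpos (by linarith), abs_of_nonpos (by linarith)]
        linarith
      rcases le_total p q with hpq | hpq
      · exact main p q hp hq hpq
      · rw [abs_sub_comm (v p), abs_sub_comm p]
        exact main q p hq hp hpq
    · -- γ < 1 : C¹ up to the boundary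
      intro hγ1
      have hbound0 : ∀ y ∈ Ico (0:ℝ) 1, v y - v 0 ≤ M₂ * y ^ (2 - γ) := by
        intro y hy
        rcases eq_or_lt_of_le hy.1 with h0 | h0
        · rw [← h0, sub_self, Real.zero_rpow (by linarith : (2:ℝ) - γ ≠ 0)]
          simp
        · have := hkey 0 (left_mem_Ico.2 (by norm_num)) y hy h0 (Or.inl rfl)
          simpa using this
      have hv0le : ∀ y ∈ Ico (0:ℝ) 1, v 0 ≤ v y := fun y hy =>
        hvmono (left_mem_Ico.2 (by norm_num)) hy hy.1
      have hset : Ico (0:ℝ) 1 \ {0} = Ioo 0 1 := by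
        ext z
        simp only [mem_diff, mem_Ico, mem_singleton_iff, mem_Ioo]
        constructor
        · rintro ⟨⟨h1, h2⟩, h3⟩
          exact ⟨lt_of_le_of_ne h1 (Ne.symm h3), h2⟩
        · rintro ⟨h1, h2⟩
          exact ⟨⟨h1.le, h2⟩, ne_of_gt h1⟩
      have htz : Tendsto (fun z : ℝ => z ^ (1 - γ)) (𝓝[Ioo (0:ℝ) 1] 0) (𝓝 0) := by
        have h1 := (Real.continuousAt_rpow_const 0 (1 - γ)
          (Or.inr (by linarith))).tendsto.mono_left
          (nhdsWithin_le_nhds (s := Ioo (0:ℝ) 1))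
        rwa [Real.zero_rpow (by linarith : (1:ℝ) - γ ≠ 0)] at h1
      have hsl : HasDerivWithinAt v 0 (Ico 0 1) 0 := by
        rw [hasDerivWithinAt_iff_tendsto_slope, hset]
        refine squeeze_zero' ?_ ?_ (by simpa using htz.const_mul M₂)
        · filter_upwards [self_mem_nhdsWithin] with z hz
          rw [slope_def_field]
          have := hv0le z (Ioo_subset_Ico_self hz)
          have hz0 : (0:ℝ) < z - 0 := by simpa using hz.1
          exact div_nonneg (by linarith) hz0.le
        · filter_upwards [self_mem_nhdsWithin] with z hz
          rw [slope_def_field]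
          have hb := hbound0 z (Ioo_subset_Ico_self hz)
          have hz0 : (0:ℝ) < z := hz.1
          have e7 : z ^ ((2:ℝ) - γ) / z = z ^ ((1:ℝ) - γ) := by
            rw [← Real.rpow_sub_one hz0.ne']
            congr 1
            ring
          rw [sub_zero]
          calc (v z - v 0) / z ≤ M₂ * z ^ ((2:ℝ) - γ) / z :=
                (div_le_div_iff_of_pos_right hz0).2 hb
            _ = M₂ * (z ^ ((2:ℝ) - γ) / z) := by ring
            _ = M₂ * z ^ ((1:ℝ) - γ) := by rw [e7]
      have hdiff : DifferentiableOn ℝ v (Ico 0 1) := by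
        intro z hz
        rcases eq_or_lt_of_le hz.1 with h0 | h0
        · exact h0 ▸ hsl.differentiableWithinAt
        · exact ((hvd z ⟨h0, hz.2⟩).differentiableAt).differentiableWithinAt
      have hG : EqOn (derivWithin v (Ico 0 1)) (fun z => if 0 < z then g z else 0) (Ico 0 1) := by
        intro z hz
        rcases eq_or_lt_of_le hz.1 with h0 | h0
        · have hz0 : z = 0 := h0.symm
          subst hz0
          show derivWithin v (Ico 0 1) 0 = if (0:ℝ) < 0 then g 0 else 0
          rw [if_neg (lt_irrefl 0)]
          exact hsl.derivWithin ((uniqueDiffOn_Ico 0 1) 0 (left_mem_Ico.2 one_pos))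
        · show derivWithin v (Ico 0 1) z = if 0 < z then g z else 0
          rw [if_pos h0, derivWithin_of_mem_nhds
            (mem_of_superset (isOpen_Ioo.mem_nhds ⟨h0, hz.2⟩) Ioo_subset_Ico_self)]
          exact hvderiv z ⟨h0, hz.2⟩
      have hGc : ContinuousOn (fun z : ℝ => if 0 < z then g z else 0) (Ico 0 1) := by
        intro z hz
        rcases eq_or_lt_of_le hz.1 with h0 | h0
        · have hz0 : z = 0 := h0.symm
          subst hz0
          have hb : ∀ᶠ w in 𝓝[Ico (0:ℝ) 1] 0,
              ‖(fun w : ℝ => if 0 < w then g w else 0) w‖ ≤ K * w ^ (1 - γ) := by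
            filter_upwards [self_mem_nhdsWithin] with w hw
            by_cases hw0 : 0 < w
            · rw [if_pos hw0]
              exact habs w ⟨hw0, hw.2⟩
            · rw [if_neg hw0]
              have hw00 : w = 0 := le_antisymm (not_lt.1 hw0) hw.1
              rw [hw00, Real.zero_rpow (by linarith : (1:ℝ) - γ ≠ 0)]
              simp
          have htz2 : Tendsto (fun w : ℝ => K * w ^ (1 - γ)) (𝓝[Ico (0:ℝ) 1] 0) (𝓝 0) := by
            have h1 := (Real.continuousAt_rpow_const 0 (1 - γ)
              (Or.inr (by linarith))).tendsto.mono_left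
              (nhdsWithin_le_nhds (s := Ico (0:ℝ) 1))
            rw [Real.zero_rpow (by linarith : (1:ℝ) - γ ≠ 0)] at h1
            simpa using h1.const_mul K
          have hres := squeeze_zero_norm' hb htz2
          show Tendsto (fun z : ℝ => if 0 < z then g z else 0) (𝓝[Ico (0:ℝ) 1] 0)
            (𝓝 (if (0:ℝ) < 0 then g 0 else 0))
          rw [if_neg (lt_irrefl 0)]
          exact hres
        · have hca : ContinuousAt g z := hgc.continuousAt (hDopen.mem_nhds ⟨h0, hz.2⟩)
          refine (hca.congr ?_).continuousWithinAt
          filter_upwards [IsOpen.mem_nhds isOpen_Ioi (show z ∈ Ioi (0:ℝ) from h0)] with w hw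
          exact (if_pos hw).symm
      have hfinal : ContDiffOn ℝ 1 v (Ico 0 1) := by
        rw [show (1 : WithTop ℕ∞) = 0 + 1 by norm_num,
          contDiffOn_succ_iff_derivWithin (uniqueDiffOn_Ico 0 1)]
        refine ⟨hdiff, by simp, ?_⟩
        rw [contDiffOn_zero]
        exact hGc.congr hG
      exact hfinal
    · -- 1 < γ : Hölder
      intro hγ1 b hb
      refine ⟨M₂, ?_⟩
      intro p hp q hq
      have hsub2 : Icc (0:ℝ) b ⊆ Ico 0 1 := fun z hz => ⟨hz.1, lt_of_le_of_lt hz.2 hb.2⟩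
      have main : ∀ p q : ℝ, p ∈ Icc (0:ℝ) b → q ∈ Icc (0:ℝ) b → p ≤ q →
          |v p - v q| ≤ M₂ * |p - q| ^ (2 - γ) := by
        intro p q hp hq hpq
        rcases eq_or_lt_of_le hpq with heq | hlt
        · rw [heq, sub_self, sub_self, abs_zero,
            Real.zero_rpow (by linarith : (2:ℝ) - γ ≠ 0)]
          simp
        · have h1 := hkey p (hsub2 hp) q (hsub2 hq) hlt (Or.inr hγ1.le)
          have h2 := hvmono (hsub2 hp) (hsub2 hq) hpq
          rw [abs_of_nonpos (by linarith : v p - v q ≤ 0),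
            abs_of_nonpos (by linarith : p - q ≤ 0),
            show -(p - q) = q - p by ring]
          linarith
      rcases le_total p q with hpq | hpq
      · exact main p q hp hq hpq
      · rw [abs_sub_comm (v p), abs_sub_comm p]
        exact main q p hq hp hpq

end
end
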